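/- arXiv:1509.03332 — 9 statements merged into one kernel-verified Lean document; each statement's English description precedes it below -/
import Mathlib

section
/- Let k, l, m be positive integers and let f assign a real number f(i,j) to each pair 1 ≤ i < j ≤ m. If f is (k+2, l+2)-free, i.e. there is no (k+2)-cup and no (l+2)-cap with respect to f, then m ≤ C(k+l, k), where C(a,b) is the binomial coefficient. -/
/-- A `t`-cup with respect to `f` on indices `{1, …, m}`: a strictly increasing
sequence `q 0 < q 1 < ⋯ < q (t-1)` of indices, with non-decreasing values of `f`
on consecutive pairs. -/
def IsCup (m : ℕ) (f : ℕ → ℕ → ℝ) (t : ℕ) (q : ℕ → ℕ) : Prop :=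
  (∀ i, i < t → 1 ≤ q i ∧ q i ≤ m) ∧
  (∀ i, i + 1 < t → q i < q (i + 1)) ∧
  (∀ i, i + 2 < t → f (q i) (q (i + 1)) ≤ f (q (i + 1)) (q (i + 2)))

/-- A `t`-cap with respect to `f` on indices `{1, …, m}`: a strictly increasing
sequence of indices with non-increasing values of `f` on consecutive pairs. -/
def IsCap (m : ℕ) (f : ℕ → ℕ → ℝ) (t : ℕ) (q : ℕ → ℕ) : Prop :=
  (∀ i, i < t → 1 ≤ q i ∧ q i ≤ m) ∧
  (∀ i, i + 1 < t → q i < q (i + 1)) ∧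
  (∀ i, i + 2 < t → f (q (i + 1)) (q (i + 2)) ≤ f (q i) (q (i + 1)))

/-- `f` is `(k, l)`-free: there is no `k`-cup and no `l`-cap with respect to `f`. -/
def IsFree (m : ℕ) (f : ℕ → ℕ → ℝ) (k l : ℕ) : Prop :=
  (¬ ∃ q, IsCup m f k q) ∧ (¬ ∃ q, IsCap m f l q)

/-- A `t`-cup with all points in a finite set `S`. -/
def CupIn (S : Finset ℕ) (f : ℕ → ℕ → ℝ) (t : ℕ) (q : ℕ → ℕ) : Prop :=
  (∀ i, i < t → q i ∈ S) ∧
  (∀ i, i + 1 < t → q i < q (i + 1)) ∧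
  (∀ i, i + 2 < t → f (q i) (q (i + 1)) ≤ f (q (i + 1)) (q (i + 2)))

/-- A `t`-cap with all points in a finite set `S`. -/
def CapIn (S : Finset ℕ) (f : ℕ → ℕ → ℝ) (t : ℕ) (q : ℕ → ℕ) : Prop :=
  (∀ i, i < t → q i ∈ S) ∧
  (∀ i, i + 1 < t → q i < q (i + 1)) ∧
  (∀ i, i + 2 < t → f (q (i + 1)) (q (i + 2)) ≤ f (q i) (q (i + 1)))

lemma CupIn.mono {S T : Finset ℕ} (hST : S ⊆ T) {f t q} (h : CupIn S f t q) :
    CupIn T f t q :=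
  ⟨fun i hi => hST (h.1 i hi), h.2.1, h.2.2⟩

lemma CapIn.mono {S T : Finset ℕ} (hST : S ⊆ T) {f t q} (h : CapIn S f t q) :
    CapIn T f t q :=
  ⟨fun i hi => hST (h.1 i hi), h.2.1, h.2.2⟩

/-- If a set has two elements, it contains a 2-cup. -/
lemma exists_two_cup {S : Finset ℕ} (h : 1 < S.card) (f : ℕ → ℕ → ℝ) :
    ∃ q, CupIn S f 2 q := by
  obtain ⟨a, ha, b, hb, hab⟩ := Finset.one_lt_card.mp h
  rcases lt_or_gt_of_ne hab with hlt | hlt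
  · exact ⟨fun i => if i = 0 then a else b,
      ⟨fun i hi => by rcases i with _ | i <;> simp [ha, hb],
       fun i hi => by have : i = 0 := by omega
                      subst this; simpa using hlt,
       fun i hi => by omega⟩⟩
  · exact ⟨fun i => if i = 0 then b else a,
      ⟨fun i hi => by rcases i with _ | i <;> simp [ha, hb],
       fun i hi => by have : i = 0 := by omega
                      subst this; simpa using hlt,
       fun i hi => by omega⟩⟩

/-- A 2-cup is also a 2-cap (the value condition is vacuous). -/
lemma two_cup_to_cap {S : Finset ℕ} {f : ℕ → ℕ → ℝ} {q} (h : CupIn S f 2 q) :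
    CapIn S f 2 q :=
  ⟨h.1, h.2.1, fun i hi => by omega⟩

/-- Key induction: a set with no `(k+2)`-cup and no `(l+2)`-cap has at most
`C(k+l, k)` elements. -/
lemma key : ∀ n k l : ℕ, ∀ S : Finset ℕ, ∀ f : ℕ → ℕ → ℝ, k + l = n →
    (¬ ∃ q, CupIn S f (k + 2) q) → (¬ ∃ q, CapIn S f (l + 2) q) →
    S.card ≤ (k + l).choose k := by
  intro n
  induction n with
  | zero =>
    intro k l S f hn hcup _
    have hk : k = 0 := by omega
    subst hk
    have hl : l = 0 := by omega
    subst hl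
    by_contra h
    exact hcup (exists_two_cup (by simp at h ⊢; omega) f)
  | succ n ih =>
    intro k l S f hn hcup hcap
    classical
    rcases Nat.eq_zero_or_pos k with hk0 | hkpos
    · subst hk0
      by_contra h
      exact hcup (exists_two_cup (by simp at h ⊢; omega) f)
    rcases Nat.eq_zero_or_pos l with hl0 | hlpos
    · subst hl0
      by_contra h
      obtain ⟨q, hq⟩ := exists_two_cup (S := S) (by simp at h ⊢; omega) f
      exact hcap ⟨q, two_cup_to_cap hq⟩
    obtain ⟨k', rfl⟩ : ∃ k', k = k' + 1 := ⟨k - 1, by omega⟩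
    obtain ⟨l', rfl⟩ : ∃ l', l = l' + 1 := ⟨l - 1, by omega⟩
    -- A : points of S ending a (k'+2)-cup (i.e. (k+1)-cup)
    set A : Finset ℕ :=
      S.filter (fun p => ∃ q, CupIn S f (k' + 2) q ∧ q (k' + 1) = p) with hA
    have hAS : A ⊆ S := Finset.filter_subset _ _
    -- B := S \ A has no (k'+2)-cup
    have hBcup : ¬ ∃ q, CupIn (S \ A) f (k' + 2) q := by
      rintro ⟨q, hq⟩
      have hqS : CupIn S f (k' + 2) q := hq.mono (Finset.sdiff_subset)
      have hend : q (k' + 1) ∈ S \ A := hq.1 (k' + 1) (by omega)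
      have : q (k' + 1) ∈ A := by
        rw [hA, Finset.mem_filter]
        exact ⟨(Finset.mem_sdiff.mp hend).1, q, hqS, rfl⟩
      exact (Finset.mem_sdiff.mp hend).2 this
    have hBcap : ¬ ∃ q, CapIn (S \ A) f (l' + 1 + 2) q := by
      rintro ⟨q, hq⟩
      exact hcap ⟨q, hq.mono (Finset.sdiff_subset)⟩
    have hBcard : (S \ A).card ≤ (k' + (l' + 1)).choose k' :=
      ih k' (l' + 1) (S \ A) f (by omega) hBcup hBcap
    -- A has no (l'+2)-cap
    have hAcap : ¬ ∃ c, CapIn A f (l' + 2) c := by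
      rintro ⟨c, hc1, hc2, hc3⟩
      have hc0A : c 0 ∈ A := hc1 0 (by omega)
      rw [hA, Finset.mem_filter] at hc0A
      obtain ⟨hc0S, q, hq, hqend⟩ := hc0A
      rcases le_total (f (q k') (q (k' + 1))) (f (c 0) (c 1)) with hle | hge
      · -- extend the cup by c 1 : a (k'+3)-cup in S
        apply hcup
        refine ⟨fun i => if i ≤ k' + 1 then q i else c (i - (k' + 1)), ?_, ?_, ?_⟩
        · intro i hi
          by_cases h : i ≤ k' + 1
          · simpa [h] using hq.1 i (by omega)
          · have hi2 : i = k' + 2 := by omega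
            have : c 1 ∈ A := hc1 1 (by omega)
            simpa [h, hi2] using hAS this
        · intro i hi
          by_cases h : i + 1 ≤ k' + 1
          · have h' : i ≤ k' + 1 := by omega
            simpa [h, h'] using hq.2.1 i (by omega)
          · have hi2 : i = k' + 1 := by omega
            subst hi2
            have : c 0 < c 1 := hc2 0 (by omega)
            simpa [hqend] using this
        · intro i hi
          by_cases h : i + 2 ≤ k' + 1
          · have h1 : i ≤ k' + 1 := by omega
            have h2 : i + 1 ≤ k' + 1 := by omega
            simpa [h, h1, h2] using hq.2.2 i (by omega)
          · have h1 : i ≤ k' + 1 := by omega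
            have h2 : i + 1 ≤ k' + 1 := by omega
            have h3 : ¬ (i + 2 ≤ k' + 1) := by omega
            have h4 : i + 2 - (k' + 1) = 1 := by omega
            have hi2 : i = k' := by omega
            subst hi2
            simpa [hqend] using hle
      · -- extend the cap by q k' : a (l'+3)-cap in S
        apply hcap
        refine ⟨fun i => if i = 0 then q k' else c (i - 1), ?_, ?_, ?_⟩
        · intro i hi
          rcases i with _ | i
          · simpa using hq.1 k' (by omega)
          · simpa using hAS (hc1 i (by omega))
        · intro i hi
          rcases i with _ | i
          · have : q k' < q (k' + 1) := hq.2.1 k' (by omega)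
            simpa [hqend] using this
          · simpa using hc2 i (by omega)
        · intro i hi
          rcases i with _ | i
          · simpa [hqend] using hge
          · simpa using hc3 i (by omega)
    have hAcup : ¬ ∃ q, CupIn A f (k' + 1 + 2) q := by
      rintro ⟨q, hq⟩
      exact hcup ⟨q, hq.mono hAS⟩
    have hAcard : A.card ≤ (k' + 1 + l').choose (k' + 1) :=
      ih (k' + 1) l' A f (by omega) hAcup hAcap
    have hsum : (S \ A).card + A.card = S.card :=
      Finset.card_sdiff_add_card_eq_card hAS
    have hpascal : (k' + 1 + (l' + 1)).choose (k' + 1) =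
        (k' + l' + 1).choose k' + (k' + l' + 1).choose (k' + 1) := by
      have := Nat.choose_succ_succ (k' + l' + 1) k'
      convert this using 2 <;> omega
    have h1 : (k' + (l' + 1)) = k' + l' + 1 := by omega
    have h2 : (k' + 1 + l') = k' + l' + 1 := by omega
    rw [h1] at hBcard
    rw [h2] at hAcard
    omega

/-- Erdős–Szekeres cup–cap theorem for `(k+2, l+2)`-free functions:
`ES'(k+2, l+2) ≤ C(k+l, k)`. -/
theorem cups_caps_bound (k l m : ℕ) (hk : 1 ≤ k) (hl : 1 ≤ l) (hm : 1 ≤ m)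
    (f : ℕ → ℕ → ℝ) (hf : IsFree m f (k + 2) (l + 2)) :
    m ≤ (k + l).choose k := by
  have hcard : (Finset.Icc 1 m).card = m := by
    rw [Nat.card_Icc]; omega
  have hcup : ¬ ∃ q, CupIn (Finset.Icc 1 m) f (k + 2) q := by
    rintro ⟨q, hq⟩
    exact hf.1 ⟨q, ⟨fun i hi => Finset.mem_Icc.mp (hq.1 i hi), hq.2.1, hq.2.2⟩⟩
  have hcap : ¬ ∃ q, CapIn (Finset.Icc 1 m) f (l + 2) q := by
    rintro ⟨q, hq⟩
    exact hf.2 ⟨q, ⟨fun i hi => Finset.mem_Icc.mp (hq.1 i hi), hq.2.1, hq.2.2⟩⟩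
  calc m = (Finset.Icc 1 m).card := hcard.symm
    _ ≤ (k + l).choose k := key (k + l) k l _ f rfl hcup hcap
end

section
/- Let k, l, m be positive integers, let f assign a real number f(i,j) to each pair 1 ≤ i < j ≤ m, and suppose f is (k+2, l+2)-free. Then for every pair 1 ≤ i < j ≤ m there exist x ∈ {1,…,k} and y ∈ {1,…,l} such that: (1) there is no (x+1)-cup with respect to f whose last two elements are (a, i) with f(a,i) ≤ f(i,j); (2) there is no (y+1)-cap whose last two elements are (b, i) with f(b,i) ≥ f(i,j); (3) there exists an (x+1)-cup whose last two elements are (a, j) with f(a,j) ≤ f(i,j); and (4) there exists a (y+1)-cap whose last two elements are (b, j) with f(b,j) ≥ f(i,j). (In the notation of the paper: α^i(x) > f(i,j) > β^i(y) and α^j(x) ≤ f(i,j) ≤ β^j(y).) -/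
lemma isCup_mono {m : ℕ} {f : ℕ → ℕ → ℝ} {t t' : ℕ} {q : ℕ → ℕ}
    (h : IsCup m f t q) (ht : t' ≤ t) : IsCup m f t' q :=
  ⟨fun i hi => h.1 i (lt_of_lt_of_le hi ht),
   fun i hi => h.2.1 i (lt_of_lt_of_le hi ht),
   fun i hi => h.2.2 i (lt_of_lt_of_le hi ht)⟩

lemma isCap_iff_isCup {m : ℕ} {f : ℕ → ℕ → ℝ} {t : ℕ} {q : ℕ → ℕ} :
    IsCap m f t q ↔ IsCup m (fun a b => -(f a b)) t q := by
  unfold IsCap IsCup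
  simp only [neg_le_neg_iff]

lemma cup_extend {k m : ℕ} {f : ℕ → ℕ → ℝ}
    (hfree : ¬ ∃ q, IsCup m f (k + 2) q)
    {i j : ℕ} (hij : i < j) (hj : j ≤ m)
    {s : ℕ} (hs : 1 ≤ s)
    (h : ∃ q, IsCup m f (s + 1) q ∧ q s = i ∧ f (q (s - 1)) i ≤ f i j) :
    s < k ∧ ∃ q, IsCup m f (s + 2) q ∧ q (s + 1) = j ∧ f (q s) j ≤ f i j := by
  obtain ⟨q, hq, hqi, hv⟩ := h
  set q' : ℕ → ℕ := fun t => if t ≤ s then q t else j with hq'def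
  have hq's : q' s = i := by simp [q', hqi]
  have hcup : IsCup m f (s + 2) q' := by
    refine ⟨?_, ?_, ?_⟩
    · intro t ht
      by_cases h' : t ≤ s
      · simpa [q', h'] using hq.1 t (by omega)
      · simp only [q', if_neg h']
        omega
    · intro t ht
      by_cases h' : t + 1 ≤ s
      · simp only [q', if_pos h', if_pos (show t ≤ s by omega)]
        exact hq.2.1 t (by omega)
      · have hts : t = s := by omega
        have e1 : q' t = i := by rw [show q' t = q t from if_pos (by omega), hts, hqi]
        have e2 : q' (t + 1) = j := if_neg (by omega)
        rw [e1, e2]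
        exact hij
    · intro t ht
      by_cases h' : t + 2 ≤ s
      · simp only [q', if_pos h', if_pos (show t + 1 ≤ s by omega),
          if_pos (show t ≤ s by omega)]
        exact hq.2.2 t (by omega)
      · have hts : t + 1 = s := by omega
        have e0 : q' t = q t := if_pos (by omega)
        have e1 : q' (t + 1) = i := by
          rw [show q' (t + 1) = q (t + 1) from if_pos (by omega), hts, hqi]
        have e2 : q' (t + 2) = j := if_neg (by omega)
        rw [e0, e1, e2, show t = s - 1 by omega]
        exact hv
  have hsk : s < k := by
    by_contra hc
    exact hfree ⟨q', isCup_mono hcup (by omega)⟩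
  refine ⟨hsk, q', hcup, ?_, ?_⟩
  · simp [q']
  · rw [hq's]

lemma cup_key {k m : ℕ} (hk : 1 ≤ k) {f : ℕ → ℕ → ℝ}
    (hfree : ¬ ∃ q, IsCup m f (k + 2) q)
    {i j : ℕ} (hi : 1 ≤ i) (hij : i < j) (hj : j ≤ m) :
    ∃ x ∈ Finset.Icc 1 k,
      (¬ ∃ q, IsCup m f (x + 1) q ∧ q x = i ∧ f (q (x - 1)) i ≤ f i j) ∧
      (∃ q, IsCup m f (x + 1) q ∧ q x = j ∧ f (q (x - 1)) j ≤ f i j) := by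
  classical
  set P : ℕ → Prop := fun s =>
    1 ≤ s ∧ ∃ q, IsCup m f (s + 1) q ∧ q s = i ∧ f (q (s - 1)) i ≤ f i j with hP
  have hbound : ∀ s, P s → s < k := fun s hs =>
    (cup_extend hfree hij hj hs.1 hs.2).1
  by_cases h : ∃ s, P s
  · obtain ⟨s0, hs0⟩ := h
    set x0 := Nat.findGreatest P k with hx0
    have hx0P : P x0 := Nat.findGreatest_spec (le_of_lt (hbound s0 hs0)) hs0
    have hx0k : x0 < k := hbound x0 hx0P
    refine ⟨x0 + 1, Finset.mem_Icc.mpr ⟨by omega, by omega⟩, ?_, ?_⟩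
    · rintro ⟨q, hq, hqi, hv⟩
      have : P (x0 + 1) := ⟨by omega, q, hq, hqi, hv⟩
      have := Nat.le_findGreatest (le_of_lt (hbound (x0 + 1) this)) this
      omega
    · obtain ⟨_, q, hq, hqj, hv⟩ := cup_extend hfree hij hj hx0P.1 hx0P.2
      exact ⟨q, hq, hqj, hv⟩
  · push_neg at h
    refine ⟨1, Finset.mem_Icc.mpr ⟨le_refl 1, hk⟩, ?_, ?_⟩
    · intro hc
      exact h 1 ⟨le_refl 1, hc⟩
    · refine ⟨fun t => if t = 0 then i else j, ⟨?_, ?_, ?_⟩, by simp, by simp⟩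
      · intro t ht
        interval_cases t <;> simp <;> omega
      · intro t ht
        have : t = 0 := by omega
        subst this
        simpa using hij
      · intro t ht
        omega

/-- Lemma 2 (first part): for a `(k+2, l+2)`-free `f` and indices `i < j`, there
are `x ∈ [k]`, `y ∈ [l]` with `α^i(x) > f(i,j) > β^i(y)` and
`α^j(x) ≤ f(i,j) ≤ β^j(y)`. -/
theorem alpha_beta_lemma (k l m : ℕ) (hk : 1 ≤ k) (hl : 1 ≤ l) (hm : 1 ≤ m)
    (f : ℕ → ℕ → ℝ) (hf : IsFree m f (k + 2) (l + 2)) :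
    ∀ i j : ℕ, 1 ≤ i → i < j → j ≤ m →
      ∃ x ∈ Finset.Icc 1 k, ∃ y ∈ Finset.Icc 1 l,
        -- (1) no (x+1)-cup ends with a pair (a, i) with f(a,i) ≤ f(i,j)
        (¬ ∃ q, IsCup m f (x + 1) q ∧ q x = i ∧ f (q (x - 1)) i ≤ f i j) ∧
        -- (2) no (y+1)-cap ends with a pair (b, i) with f(b,i) ≥ f(i,j)
        (¬ ∃ q, IsCap m f (y + 1) q ∧ q y = i ∧ f i j ≤ f (q (y - 1)) i) ∧
        -- (3) some (x+1)-cup ends with a pair (a, j) with f(a,j) ≤ f(i,j)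
        (∃ q, IsCup m f (x + 1) q ∧ q x = j ∧ f (q (x - 1)) j ≤ f i j) ∧
        -- (4) some (y+1)-cap ends with a pair (b, j) with f(b,j) ≥ f(i,j)
        (∃ q, IsCap m f (y + 1) q ∧ q y = j ∧ f i j ≤ f (q (y - 1)) j) := by
  intro i j hi hij hj
  obtain ⟨x, hx, h1, h3⟩ := cup_key hk hf.1 hi hij hj
  have hfree2 : ¬ ∃ q, IsCup m (fun a b => -(f a b)) (l + 2) q := by
    simpa [← isCap_iff_isCup] using hf.2
  obtain ⟨y, hy, h2, h4⟩ := cup_key hl hfree2 hi hij hj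
  refine ⟨x, hx, y, hy, h1, ?_, h3, ?_⟩
  · simpa [isCap_iff_isCup, neg_le_neg_iff] using h2
  · simpa [isCap_iff_isCup, neg_le_neg_iff] using h4
end

section
/- Let k, l, m be positive integers, let f assign a real number f(i,j) to each pair 1 ≤ i < j ≤ m, and suppose f is (k+2, l+2)-free. Then for every pair 1 ≤ i < j ≤ m there exist x' ∈ {1,…,k} and y' ∈ {1,…,l} such that: (1) there is no (x'+1)-cup with respect to f whose first two elements are (j, a) with f(j,a) ≥ f(i,j); (2) there is no (y'+1)-cap whose first two elements are (j, b) with f(j,b) ≤ f(i,j); (3) there exists an (x'+1)-cup whose first two elements are (i, a) with f(i,a) ≥ f(i,j); and (4) there exists a (y'+1)-cap whose first two elements are (i, b) with f(i,b) ≤ f(i,j). (In the notation of the paper: γ^j(x') < f(i,j) < δ^j(y') and γ^i(x') ≥ f(i,j) ≥ δ^i(y').) -/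
/-- A cap for `f` is a cup for `-f`. -/
lemma isCap_iff_isCup_neg (m : ℕ) (f : ℕ → ℕ → ℝ) (t : ℕ) (q : ℕ → ℕ) :
    IsCap m f t q ↔ IsCup m (fun a b => -(f a b)) t q := by
  unfold IsCap IsCup
  constructor <;> rintro ⟨h1, h2, h3⟩ <;> refine ⟨h1, h2, fun i hi => ?_⟩ <;>
    have := h3 i hi <;> simpa using this

/-- Prepending an index before a cup. -/
lemma isCup_prepend (m : ℕ) (f : ℕ → ℕ → ℝ) (t : ℕ) (q : ℕ → ℕ) (i : ℕ)
    (hq : IsCup m f (t + 1) q) (hi : 1 ≤ i) (him : i < q 0)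
    (h2 : f i (q 0) ≤ f (q 0) (q 1)) :
    IsCup m f (t + 2) (fun n => match n with | 0 => i | Nat.succ s => q s) := by
  obtain ⟨hb, hmono, hf⟩ := hq
  refine ⟨?_, ?_, ?_⟩
  · intro n hn
    match n with
    | 0 =>
      exact ⟨hi, le_trans (le_of_lt him) (hb 0 (Nat.succ_pos t)).2⟩
    | Nat.succ s =>
      exact hb s (by omega)
  · intro n hn
    match n with
    | 0 => exact him
    | Nat.succ s => exact hmono s (by omega)
  · intro n hn
    match n with
    | 0 => exact h2
    | Nat.succ s => exact hf s (by omega)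

/-- The cup half of the lemma. -/
lemma cup_aux (k m : ℕ) (hk : 1 ≤ k) (f : ℕ → ℕ → ℝ)
    (hf : ¬ ∃ q, IsCup m f (k + 2) q)
    (i j : ℕ) (hi : 1 ≤ i) (hij : i < j) (hj : j ≤ m) :
    ∃ x' ∈ Finset.Icc 1 k,
      (¬ ∃ q, IsCup m f (x' + 1) q ∧ q 0 = j ∧ f i j ≤ f j (q 1)) ∧
      (∃ q, IsCup m f (x' + 1) q ∧ q 0 = i ∧ f i j ≤ f i (q 1)) := by
  classical
  set P : ℕ → Prop := fun t => ∃ q, IsCup m f (t + 1) q ∧ q 0 = j ∧ f i j ≤ f j (q 1) with hP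
  set X := Nat.findGreatest P k with hX
  -- X < k
  have hXk : X < k := by
    rcases Nat.lt_or_ge X k with h | h
    · exact h
    · exfalso
      have hXk' : X = k := le_antisymm (Nat.findGreatest_le k) h
      have hPk : P X := Nat.findGreatest_of_ne_zero hX.symm (by omega)
      obtain ⟨q, hq, hq0, hqf⟩ := hPk
      rw [hXk'] at hq
      refine hf ⟨_, isCup_prepend m f k q i hq hi (hq0 ▸ hij) ?_⟩
      rw [hq0]; exact hqf
  refine ⟨X + 1, Finset.mem_Icc.mpr ⟨by omega, by omega⟩, ?_, ?_⟩
  · exact Nat.findGreatest_is_greatest (P := P) (n := k) (by omega) (by omega)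
  · rcases Nat.eq_zero_or_pos X with h0 | h0
    · -- trivial 2-cup (i, j)
      refine ⟨fun n => match n with | 0 => i | Nat.succ _ => j, ?_, rfl, le_refl _⟩
      rw [h0]
      refine ⟨?_, ?_, ?_⟩
      · intro n hn
        match n with
        | 0 => exact ⟨hi, le_trans (le_of_lt hij) hj⟩
        | Nat.succ s => exact ⟨le_trans hi (le_of_lt hij), hj⟩
      · intro n hn
        match n with
        | 0 => exact hij
        | Nat.succ s => omega
      · intro n hn; omega
    · have hPX : P X := Nat.findGreatest_of_ne_zero hX.symm (by omega)
      obtain ⟨q, hq, hq0, hqf⟩ := hPX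
      refine ⟨_, isCup_prepend m f X q i hq hi (hq0 ▸ hij) ?_, rfl, ?_⟩
      · rw [hq0]; exact hqf
      · simp [hq0]

/-- Lemma 2 (second, symmetric part): for a `(k+2, l+2)`-free `f` and indices
`i < j`, there are `x' ∈ [k]`, `y' ∈ [l]` with `γ^j(x') < f(i,j) < δ^j(y')` and
`γ^i(x') ≥ f(i,j) ≥ δ^i(y')`. -/
theorem gamma_delta_lemma (k l m : ℕ) (hk : 1 ≤ k) (hl : 1 ≤ l) (hm : 1 ≤ m)
    (f : ℕ → ℕ → ℝ) (hf : IsFree m f (k + 2) (l + 2)) :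
    ∀ i j : ℕ, 1 ≤ i → i < j → j ≤ m →
      ∃ x' ∈ Finset.Icc 1 k, ∃ y' ∈ Finset.Icc 1 l,
        -- (1) no (x'+1)-cup starts with a pair (j, a) with f(j,a) ≥ f(i,j)
        (¬ ∃ q, IsCup m f (x' + 1) q ∧ q 0 = j ∧ f i j ≤ f j (q 1)) ∧
        -- (2) no (y'+1)-cap starts with a pair (j, b) with f(j,b) ≤ f(i,j)
        (¬ ∃ q, IsCap m f (y' + 1) q ∧ q 0 = j ∧ f j (q 1) ≤ f i j) ∧
        -- (3) some (x'+1)-cup starts with a pair (i, a) with f(i,a) ≥ f(i,j)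
        (∃ q, IsCup m f (x' + 1) q ∧ q 0 = i ∧ f i j ≤ f i (q 1)) ∧
        -- (4) some (y'+1)-cap starts with a pair (i, b) with f(i,b) ≤ f(i,j)
        (∃ q, IsCap m f (y' + 1) q ∧ q 0 = i ∧ f i (q 1) ≤ f i j) := by
  intro i j hi hij hj
  obtain ⟨x', hx', hx1, hx3⟩ := cup_aux k m hk f hf.1 i j hi hij hj
  have hfneg : ¬ ∃ q, IsCup m (fun a b => -(f a b)) (l + 2) q := by
    intro ⟨q, hq⟩
    exact hf.2 ⟨q, (isCap_iff_isCup_neg m f (l + 2) q).mpr hq⟩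
  obtain ⟨y', hy', hy1, hy3⟩ := cup_aux l m hl (fun a b => -(f a b)) hfneg i j hi hij hj
  refine ⟨x', hx', y', hy', hx1, ?_, hx3, ?_⟩
  · rintro ⟨q, hq, hq0, hqf⟩
    exact hy1 ⟨q, (isCap_iff_isCup_neg m f (y' + 1) q).mp hq, hq0, by simpa using hqf⟩
  · obtain ⟨q, hq, hq0, hqf⟩ := hy3
    exact ⟨q, (isCap_iff_isCup_neg m f (y' + 1) q).mpr hq, hq0, by simpa using hqf⟩
end

section
/- Let k, l, m be positive integers, let f assign a real number f(i,j) to each pair 1 ≤ i < j ≤ m, and suppose f is (k+2, l+2)-free. Then for every pair 1 ≤ i < j ≤ m there exist x ∈ {1,…,k} and y ∈ {1,…,l} such that: (1) whenever an (x+1)-cup with respect to f ends with the pair (a, i) and a (y+1)-cap ends with the pair (b, i), one has f(a,i) > f(b,i) (this holds vacuously if either does not exist); and (2) there exist an (x+1)-cup ending with a pair (a, j) and a (y+1)-cap ending with a pair (b, j) such that f(a,j) ≤ f(b,j). (Consequently the words L_i and L_j of the paper are distinct for i ≠ j.) -/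
lemma IsCup.mono {m t t' : ℕ} {f : ℕ → ℕ → ℝ} {q : ℕ → ℕ}
    (h : IsCup m f t q) (h' : t' ≤ t) : IsCup m f t' q :=
  ⟨fun i hi => h.1 i (by omega), fun i hi => h.2.1 i (by omega),
   fun i hi => h.2.2 i (by omega)⟩

lemma IsCap.mono {m t t' : ℕ} {f : ℕ → ℕ → ℝ} {q : ℕ → ℕ}
    (h : IsCap m f t q) (h' : t' ≤ t) : IsCap m f t' q :=
  ⟨fun i hi => h.1 i (by omega), fun i hi => h.2.1 i (by omega),
   fun i hi => h.2.2 i (by omega)⟩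

lemma extend_cup (m : ℕ) (f : ℕ → ℕ → ℝ) (x : ℕ) (hx : 1 ≤ x) (q : ℕ → ℕ)
    (h : IsCup m f (x + 1) q) (j : ℕ) (hj1 : 1 ≤ j) (hjm : j ≤ m)
    (hlt : q x < j) (hval : f (q (x - 1)) (q x) ≤ f (q x) j) :
    IsCup m f (x + 2) (fun n => if n ≤ x then q n else j) := by
  obtain ⟨hb, hmono, hconv⟩ := h
  refine ⟨?_, ?_, ?_⟩
  · intro n hn
    by_cases hnx : n ≤ x
    · simpa [hnx] using hb n (by omega)
    · simp only [hnx, if_false]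
      exact ⟨hj1, hjm⟩
  · intro n hn
    by_cases h1 : n + 1 ≤ x
    · simp only [h1, show n ≤ x by omega, if_true]
      exact hmono n (by omega)
    · have hn' : n = x := by omega
      rw [hn']
      simp only [le_refl, if_true, show ¬ (x + 1 ≤ x) by omega, if_false]
      exact hlt
  · intro n hn
    by_cases h2 : n + 2 ≤ x
    · simp only [h2, show n ≤ x by omega, show n + 1 ≤ x by omega, if_true]
      exact hconv n (by omega)
    · have hn' : n = x - 1 := by omega
      rw [hn']
      simp only [show x - 1 ≤ x by omega, show x - 1 + 1 ≤ x by omega,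
        show ¬ (x - 1 + 2 ≤ x) by omega, if_true, if_false]
      rw [show x - 1 + 1 = x by omega]
      exact hval

lemma extend_cap (m : ℕ) (f : ℕ → ℕ → ℝ) (x : ℕ) (hx : 1 ≤ x) (q : ℕ → ℕ)
    (h : IsCap m f (x + 1) q) (j : ℕ) (hj1 : 1 ≤ j) (hjm : j ≤ m)
    (hlt : q x < j) (hval : f (q x) j ≤ f (q (x - 1)) (q x)) :
    IsCap m f (x + 2) (fun n => if n ≤ x then q n else j) := by
  obtain ⟨hb, hmono, hconv⟩ := h
  refine ⟨?_, ?_, ?_⟩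
  · intro n hn
    by_cases hnx : n ≤ x
    · simpa [hnx] using hb n (by omega)
    · simp only [hnx, if_false]
      exact ⟨hj1, hjm⟩
  · intro n hn
    by_cases h1 : n + 1 ≤ x
    · simp only [h1, show n ≤ x by omega, if_true]
      exact hmono n (by omega)
    · have hn' : n = x := by omega
      rw [hn']
      simp only [le_refl, if_true, show ¬ (x + 1 ≤ x) by omega, if_false]
      exact hlt
  · intro n hn
    by_cases h2 : n + 2 ≤ x
    · simp only [h2, show n ≤ x by omega, show n + 1 ≤ x by omega, if_true]
      exact hconv n (by omega)
    · have hn' : n = x - 1 := by omega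
      rw [hn']
      simp only [show x - 1 ≤ x by omega, show x - 1 + 1 ≤ x by omega,
        show ¬ (x - 1 + 2 ≤ x) by omega, if_true, if_false]
      rw [show x - 1 + 1 = x by omega]
      exact hval

/-- For a `(k+2, l+2)`-free `f` and `i < j`, there exist `x ∈ [k]`, `y ∈ [l]`
such that every `(x+1)`-cup ending at `i` has a strictly larger last value than
every `(y+1)`-cap ending at `i`, while some `(x+1)`-cup and `(y+1)`-cap ending
at `j` compare the other way. (Hence the words `L_i` are pairwise distinct.) -/
theorem L_words_distinct (k l m : ℕ) (hk : 1 ≤ k) (hl : 1 ≤ l) (hm : 1 ≤ m)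
    (f : ℕ → ℕ → ℝ) (hf : IsFree m f (k + 2) (l + 2)) :
    ∀ i j : ℕ, 1 ≤ i → i < j → j ≤ m →
      ∃ x ∈ Finset.Icc 1 k, ∃ y ∈ Finset.Icc 1 l,
        -- (1) every (x+1)-cup ending at i beats every (y+1)-cap ending at i
        (∀ qc qd, IsCup m f (x + 1) qc → qc x = i →
          IsCap m f (y + 1) qd → qd y = i →
          f (qd (y - 1)) i < f (qc (x - 1)) i) ∧
        -- (2) some (x+1)-cup and some (y+1)-cap ending at j with f(a,j) ≤ f(b,j)
        (∃ qc qd, IsCup m f (x + 1) qc ∧ qc x = j ∧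
          IsCap m f (y + 1) qd ∧ qd y = j ∧
          f (qc (x - 1)) j ≤ f (qd (y - 1)) j) := by
  intro i j hi hij hjm
  classical
  have him : i ≤ m := le_trans hij.le hjm
  have hj1 : 1 ≤ j := by omega
  set P : ℕ → Prop := fun t => ∃ q, IsCup m f (t + 1) q ∧ q (t - 1) = i ∧ q t = j with hPdef
  set Q : ℕ → Prop := fun t => ∃ q, IsCap m f (t + 1) q ∧ q (t - 1) = i ∧ q t = j with hQdef
  have hP1 : P 1 := by
    refine ⟨fun n => if n = 0 then i else j, ⟨?_, ?_, ?_⟩, by simp, by simp⟩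
    · intro n hn
      interval_cases n <;> simp <;> omega
    · intro n hn
      have hn0 : n = 0 := by omega
      subst hn0
      simpa using hij
    · intro n hn
      omega
  have hQ1 : Q 1 := by
    refine ⟨fun n => if n = 0 then i else j, ⟨?_, ?_, ?_⟩, by simp, by simp⟩
    · intro n hn
      interval_cases n <;> simp <;> omega
    · intro n hn
      have hn0 : n = 0 := by omega
      subst hn0
      simpa using hij
    · intro n hn
      omega
  have hPk : ∀ t, P t → t ≤ k := by
    rintro t ⟨q, hq, -, -⟩
    by_contra hcon
    exact hf.1 ⟨q, hq.mono (by omega)⟩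
  have hQl : ∀ t, Q t → t ≤ l := by
    rintro t ⟨q, hq, -, -⟩
    by_contra hcon
    exact hf.2 ⟨q, hq.mono (by omega)⟩
  set x := Nat.findGreatest P k with hxdef
  set y := Nat.findGreatest Q l with hydef
  have hx1 : 1 ≤ x := Nat.le_findGreatest hk hP1
  have hxk : x ≤ k := Nat.findGreatest_le k
  have hPx : P x := Nat.findGreatest_spec hk hP1
  have hPx1 : ¬ P (x + 1) := fun h =>
    Nat.findGreatest_is_greatest (by omega) (hPk _ h) h
  have hy1 : 1 ≤ y := Nat.le_findGreatest hl hQ1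
  have hyl : y ≤ l := Nat.findGreatest_le l
  have hQy : Q y := Nat.findGreatest_spec hl hQ1
  have hQy1 : ¬ Q (y + 1) := fun h =>
    Nat.findGreatest_is_greatest (by omega) (hQl _ h) h
  refine ⟨x, Finset.mem_Icc.mpr ⟨hx1, hxk⟩, y, Finset.mem_Icc.mpr ⟨hy1, hyl⟩, ?_, ?_⟩
  · intro qc qd hcup hci hcap hdi
    by_contra hcon
    push_neg at hcon
    by_cases hA : f (qc (x - 1)) i ≤ f i j
    · apply hPx1
      refine ⟨fun n => if n ≤ x then qc n else j, ?_, ?_, ?_⟩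
      · exact extend_cup m f x hx1 qc hcup j hj1 hjm
          (by rw [hci]; exact hij) (by rw [hci]; exact hA)
      · simp only [Nat.add_sub_cancel, le_refl, if_true]
        exact hci
      · simp
    · apply hQy1
      push_neg at hA
      refine ⟨fun n => if n ≤ y then qd n else j, ?_, ?_, ?_⟩
      · exact extend_cap m f y hy1 qd hcap j hj1 hjm
          (by rw [hdi]; exact hij) (by rw [hdi]; exact le_trans hA.le hcon)
      · simp only [Nat.add_sub_cancel, le_refl, if_true]
        exact hdi
      · simp
  · obtain ⟨qc, hqc, hqci, hqcj⟩ := hPx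
    obtain ⟨qd, hqd, hqdi, hqdj⟩ := hQy
    exact ⟨qc, qd, hqc, hqcj, hqd, hqdj, by rw [hqci, hqdi]⟩
end

section
/- Let k, l, m be positive integers, let f assign a real number f(i,j) to each pair 1 ≤ i < j ≤ m, and suppose f is (k+2, l+2)-free. Then for every pair 1 ≤ i < j ≤ m there exist x' ∈ {1,…,k} and y' ∈ {1,…,l} such that: (1) whenever an (x'+1)-cup with respect to f starts with the pair (j, a) and a (y'+1)-cap starts with the pair (j, b), one has f(j,a) < f(j,b) (this holds vacuously if either does not exist); and (2) there exist an (x'+1)-cup starting with a pair (i, a) and a (y'+1)-cap starting with a pair (i, b) such that f(i,a) ≥ f(i,b). (Consequently the words R_i and R_j of the paper are distinct for i ≠ j.) -/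
lemma cup_mono {m : ℕ} {f : ℕ → ℕ → ℝ} {t s : ℕ} {q : ℕ → ℕ}
    (h : IsCup m f t q) (hs : s ≤ t) : IsCup m f s q :=
  ⟨fun i hi => h.1 i (by omega), fun i hi => h.2.1 i (by omega),
   fun i hi => h.2.2 i (by omega)⟩

lemma cap_mono {m : ℕ} {f : ℕ → ℕ → ℝ} {t s : ℕ} {q : ℕ → ℕ}
    (h : IsCap m f t q) (hs : s ≤ t) : IsCap m f s q :=
  ⟨fun i hi => h.1 i (by omega), fun i hi => h.2.1 i (by omega),
   fun i hi => h.2.2 i (by omega)⟩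

lemma cup_prepend {m : ℕ} {f : ℕ → ℕ → ℝ} {t i : ℕ} {q : ℕ → ℕ}
    (hcup : IsCup m f t q) (ht : 2 ≤ t) (hi1 : 1 ≤ i) (hij : i < q 0)
    (hval : f i (q 0) ≤ f (q 0) (q 1)) :
    IsCup m f (t + 1) (fun n => if n = 0 then i else q (n - 1)) := by
  refine ⟨?_, ?_, ?_⟩
  · intro n hn
    match n with
    | 0 => exact ⟨hi1, le_trans (le_of_lt hij) (hcup.1 0 (by omega)).2⟩
    | s + 1 => simpa using hcup.1 s (by omega)
  · intro n hn
    match n with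
    | 0 => simpa using hij
    | s + 1 => simpa using hcup.2.1 s (by omega)
  · intro n hn
    match n with
    | 0 => simpa using hval
    | s + 1 => simpa using hcup.2.2 s (by omega)

lemma cap_prepend {m : ℕ} {f : ℕ → ℕ → ℝ} {t i : ℕ} {q : ℕ → ℕ}
    (hcap : IsCap m f t q) (ht : 2 ≤ t) (hi1 : 1 ≤ i) (hij : i < q 0)
    (hval : f (q 0) (q 1) ≤ f i (q 0)) :
    IsCap m f (t + 1) (fun n => if n = 0 then i else q (n - 1)) := by
  refine ⟨?_, ?_, ?_⟩
  · intro n hn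
    match n with
    | 0 => exact ⟨hi1, le_trans (le_of_lt hij) (hcap.1 0 (by omega)).2⟩
    | s + 1 => simpa using hcap.1 s (by omega)
  · intro n hn
    match n with
    | 0 => simpa using hij
    | s + 1 => simpa using hcap.2.1 s (by omega)
  · intro n hn
    match n with
    | 0 => simpa using hval
    | s + 1 => simpa using hcap.2.2 s (by omega)

/-- Symmetric version: for a `(k+2, l+2)`-free `f` and `i < j`, there exist
`x' ∈ [k]`, `y' ∈ [l]` such that every `(x'+1)`-cup starting at `j` has a
strictly smaller first value than every `(y'+1)`-cap starting at `j`, while some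
`(x'+1)`-cup and `(y'+1)`-cap starting at `i` compare the other way. (Hence the
words `R_i` are pairwise distinct.) -/
theorem R_words_distinct (k l m : ℕ) (hk : 1 ≤ k) (hl : 1 ≤ l) (hm : 1 ≤ m)
    (f : ℕ → ℕ → ℝ) (hf : IsFree m f (k + 2) (l + 2)) :
    ∀ i j : ℕ, 1 ≤ i → i < j → j ≤ m →
      ∃ x' ∈ Finset.Icc 1 k, ∃ y' ∈ Finset.Icc 1 l,
        -- (1) every (x'+1)-cup starting at j is below every (y'+1)-cap starting at j
        (∀ qc qd, IsCup m f (x' + 1) qc → qc 0 = j →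
          IsCap m f (y' + 1) qd → qd 0 = j →
          f j (qc 1) < f j (qd 1)) ∧
        -- (2) some (x'+1)-cup and some (y'+1)-cap starting at i with f(i,a) ≥ f(i,b)
        (∃ qc qd, IsCup m f (x' + 1) qc ∧ qc 0 = i ∧
          IsCap m f (y' + 1) qd ∧ qd 0 = i ∧
          f i (qd 1) ≤ f i (qc 1)) := by
  intro i j hi hij hjm
  classical
  set P : ℕ → Prop := fun t => ∃ q, IsCup m f t q ∧ q 0 = i ∧ q 1 = j with hP
  set Q : ℕ → Prop := fun t => ∃ q, IsCap m f t q ∧ q 0 = i ∧ q 1 = j with hQ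
  have hP2 : P 2 := by
    refine ⟨fun n => if n = 0 then i else j, ⟨?_, ?_, ?_⟩, by simp, by simp⟩
    · intro n hn
      interval_cases n <;> simp <;> omega
    · intro n hn
      match n with
      | 0 => simpa using hij
    · intro n hn; omega
  have hQ2 : Q 2 := by
    refine ⟨fun n => if n = 0 then i else j, ⟨?_, ?_, ?_⟩, by simp, by simp⟩
    · intro n hn
      interval_cases n <;> simp <;> omega
    · intro n hn
      match n with
      | 0 => simpa using hij
    · intro n hn; omega
  have hPbd : ∀ t, P t → t ≤ k + 1 := by
    intro t ⟨q, hq, _, _⟩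
    by_contra h
    exact hf.1 ⟨q, cup_mono hq (by omega)⟩
  have hQbd : ∀ t, Q t → t ≤ l + 1 := by
    intro t ⟨q, hq, _, _⟩
    by_contra h
    exact hf.2 ⟨q, cap_mono hq (by omega)⟩
  set α := Nat.findGreatest P (k + 1) with hαdef
  set β := Nat.findGreatest Q (l + 1) with hβdef
  have hα2 : 2 ≤ α := Nat.le_findGreatest (by omega) hP2
  have hβ2 : 2 ≤ β := Nat.le_findGreatest (by omega) hQ2
  have hαk : α ≤ k + 1 := Nat.findGreatest_le _
  have hβl : β ≤ l + 1 := Nat.findGreatest_le _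
  have hPα : P α := Nat.findGreatest_spec (P := P) (by omega : 2 ≤ k + 1) hP2
  have hQβ : Q β := Nat.findGreatest_spec (P := Q) (by omega : 2 ≤ l + 1) hQ2
  have hnotPα1 : ¬ P (α + 1) := by
    intro h
    have h1 := hPbd _ h
    exact Nat.findGreatest_is_greatest (Nat.lt_succ_self _) h1 h
  have hnotQβ1 : ¬ Q (β + 1) := by
    intro h
    have h1 := hQbd _ h
    exact Nat.findGreatest_is_greatest (Nat.lt_succ_self _) h1 h
  refine ⟨α - 1, by simp [Finset.mem_Icc]; omega, β - 1, by simp [Finset.mem_Icc]; omega, ?_, ?_⟩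
  · intro qc qd hqc hqc0 hqd hqd0
    have hqc' : IsCup m f α qc := by rwa [show α - 1 + 1 = α by omega] at hqc
    have hqd' : IsCap m f β qd := by rwa [show β - 1 + 1 = β by omega] at hqd
    by_contra h
    push_neg at h
    rcases le_or_gt (f i j) (f j (qc 1)) with hle | hlt
    · apply hnotPα1
      refine ⟨_, cup_prepend hqc' hα2 hi (by omega) (by rw [hqc0]; exact hle), by simp, by simpa⟩
    · apply hnotQβ1
      refine ⟨_, cap_prepend hqd' hβ2 hi (by omega)
        (by rw [hqd0]; exact le_trans h (le_of_lt hlt)), by simp, by simpa⟩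
  · obtain ⟨qc, hqc, hqc0, hqc1⟩ := hPα
    obtain ⟨qd, hqd, hqd0, hqd1⟩ := hQβ
    refine ⟨qc, qd, by rwa [show α - 1 + 1 = α by omega], hqc0,
      by rwa [show β - 1 + 1 = β by omega], hqd0, by rw [hqc1, hqd1]⟩
end

section
/- (Tóth–Valtr reduction.) Let n ≥ 3 and let N be a positive integer such that every finite set of at least N points in the plane in general position with pairwise distinct x-coordinates contains either n points in convex position or an (n−1)-cap. Then every finite set of at least N+1 points in the plane in general position contains n points in convex position; that is, ES(n) ≤ N+1. -/
/-- A finite set of points in the plane is in general position if no three of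
its points are collinear. -/
def GeneralPosition (P : Finset (ℝ × ℝ)) : Prop :=
  ∀ p ∈ P, ∀ q ∈ P, ∀ r ∈ P, p ≠ q → p ≠ r → q ≠ r →
    ¬ Collinear ℝ ({p, q, r} : Set (ℝ × ℝ))

/-- A finite set of points is in convex position if no point of the set lies in
the convex hull of the other points. -/
def ConvexPosition (S : Finset (ℝ × ℝ)) : Prop :=
  ∀ p ∈ S, p ∉ convexHull ℝ ((S : Set (ℝ × ℝ)) \ {p})

/-- The ptSlope of the line through two points (with distinct x-coordinates). -/
noncomputable def ptSlope (p q : ℝ × ℝ) : ℝ := (q.2 - p.2) / (q.1 - p.1)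

/-- The points of `P` have pairwise distinct x-coordinates. -/
def DistinctX (P : Finset (ℝ × ℝ)) : Prop :=
  ∀ p ∈ P, ∀ q ∈ P, p ≠ q → p.1 ≠ q.1

/-- A `t`-cup in `P`: a sequence `q 0, …, q (t-1)` of points of `P` with strictly
increasing x-coordinates and non-decreasing slopes of consecutive segments. -/
def IsGCup (P : Finset (ℝ × ℝ)) (t : ℕ) (q : ℕ → ℝ × ℝ) : Prop :=
  (∀ i, i < t → q i ∈ P) ∧
  (∀ i, i + 1 < t → (q i).1 < (q (i + 1)).1) ∧
  (∀ i, i + 2 < t → ptSlope (q i) (q (i + 1)) ≤ ptSlope (q (i + 1)) (q (i + 2)))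

/-- A `t`-cap in `P`: a sequence of points of `P` with strictly increasing
x-coordinates and non-increasing slopes of consecutive segments. -/
def IsGCap (P : Finset (ℝ × ℝ)) (t : ℕ) (q : ℕ → ℝ × ℝ) : Prop :=
  (∀ i, i < t → q i ∈ P) ∧
  (∀ i, i + 1 < t → (q i).1 < (q (i + 1)).1) ∧
  (∀ i, i + 2 < t → ptSlope (q (i + 1)) (q (i + 2)) ≤ ptSlope (q i) (q (i + 1)))

noncomputable section
namespace TV

def cross (a b c : ℝ × ℝ) : ℝ := (b.1 - a.1) * (c.2 - a.2) - (b.2 - a.2) * (c.1 - a.1)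

def Tm (w : ℝ × ℝ) : ℝ × ℝ := (w.1 / w.2, -1 / w.2)

def Lm (t : ℝ) (p z : ℝ × ℝ) : ℝ × ℝ :=
  (z.1 - t * z.2 - (p.1 - t * p.2), (t * z.1 + z.2) - (t * p.1 + p.2))

def Phi (t : ℝ) (p z : ℝ × ℝ) : ℝ × ℝ := Tm (Lm t p z)

lemma crossL (t : ℝ) (p a b c : ℝ × ℝ) :
    cross (Lm t p a) (Lm t p b) (Lm t p c) = (1 + t^2) * cross a b c := by
  simp only [cross, Lm]; ring

lemma crossT (a b c : ℝ × ℝ) (ha : a.2 ≠ 0) (hb : b.2 ≠ 0) (hc : c.2 ≠ 0) :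
    cross (Tm a) (Tm b) (Tm c) * (a.2 * b.2 * c.2) = cross a b c := by
  simp only [cross, Tm]; field_simp; ring

lemma collinear_iff_cross (a b c : ℝ × ℝ) :
    Collinear ℝ ({a, b, c} : Set (ℝ × ℝ)) ↔ cross a b c = 0 := by
  constructor
  · intro h
    rw [collinear_iff_of_mem (Set.mem_insert a {b, c})] at h
    obtain ⟨v, hv⟩ := h
    obtain ⟨rb, hrb⟩ := hv b (by simp)
    obtain ⟨rc, hrc⟩ := hv c (by simp)
    have hb1 : b.1 = rb * v.1 + a.1 := by rw [hrb]; simp [Prod.smul_def]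
    have hb2 : b.2 = rb * v.2 + a.2 := by rw [hrb]; simp [Prod.smul_def]
    have hc1 : c.1 = rc * v.1 + a.1 := by rw [hrc]; simp [Prod.smul_def]
    have hc2 : c.2 = rc * v.2 + a.2 := by rw [hrc]; simp [Prod.smul_def]
    simp only [cross, hb1, hb2, hc1, hc2]; ring
  · intro h
    by_cases hab : b = a
    · have : ({a, b, c} : Set (ℝ × ℝ)) = {a, c} := by rw [hab]; simp [Set.insert_comm]
      rw [this]; exact collinear_pair ℝ a c
    · rw [collinear_iff_of_mem (Set.mem_insert a {b, c})]
      refine ⟨b - a, ?_⟩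
      intro q hq
      rcases hq with rfl | rfl | rfl
      · exact ⟨0, by simp⟩
      · exact ⟨1, by simp⟩
      · by_cases h1 : b.1 = a.1
        · have h2 : b.2 ≠ a.2 := fun h2 => hab (Prod.ext h1 h2)
          refine ⟨(q.2 - a.2) / (b.2 - a.2), ?_⟩
          have hc1 : q.1 = a.1 := by
            have := h
            simp only [cross, h1, sub_self, zero_mul, zero_sub, neg_eq_zero,
              mul_eq_zero, sub_eq_zero] at this
            rcases this with h' | h'
            · exact absurd h' h2
            · exact h'
          apply Prod.ext
          · simp [Prod.smul_def, h1, hc1]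
          · simp [Prod.smul_def, h1, hc1]
            rw [div_mul_cancel₀ _ (sub_ne_zero.mpr h2)]
            ring
        · refine ⟨(q.1 - a.1) / (b.1 - a.1), ?_⟩
          have hb1 : b.1 - a.1 ≠ 0 := sub_ne_zero.mpr h1
          have h2 : q.2 - a.2 = (q.1 - a.1) / (b.1 - a.1) * (b.2 - a.2) := by
            field_simp
            simp only [cross] at h
            nlinarith [h]
          apply Prod.ext
          · simp [Prod.smul_def]; field_simp; ring
          · simp [Prod.smul_def]; linarith [h2]

lemma sep_lemma (c₁ c₂ : ℝ) (A : Set (ℝ × ℝ)) (s : ℝ × ℝ)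
    (h : ∀ x ∈ A, c₁ * x.1 + c₂ * x.2 < c₁ * s.1 + c₂ * s.2) :
    s ∉ convexHull ℝ A := by
  intro hs
  have hlin : IsLinearMap ℝ (fun z : ℝ × ℝ => c₁ * z.1 + c₂ * z.2) := by
    constructor
    · intro x y; simp [Prod.fst_add, Prod.snd_add]; ring
    · intro c x; simp [Prod.smul_def, smul_eq_mul]; ring
  have hconv : Convex ℝ {z : ℝ × ℝ | c₁ * z.1 + c₂ * z.2 < c₁ * s.1 + c₂ * s.2} :=
    convex_halfSpace_lt hlin _
  have hsub : convexHull ℝ A ⊆ {z : ℝ × ℝ | c₁ * z.1 + c₂ * z.2 < c₁ * s.1 + c₂ * s.2} :=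
    convexHull_min h hconv
  have h3 := hsub hs
  simp only [Set.mem_setOf_eq] at h3
  exact lt_irrefl _ h3

lemma push (t : ℝ) (p : ℝ × ℝ) (A : Finset (ℝ × ℝ)) (s : ℝ × ℝ)
    (hA : ∀ a ∈ A, 0 < (Lm t p a).2) (hs0 : 0 < (Lm t p s).2)
    (hmem : s ∈ convexHull ℝ (A : Set (ℝ × ℝ))) :
    Phi t p s ∈ convexHull ℝ (Phi t p '' (A : Set (ℝ × ℝ))) := by
  rw [Finset.convexHull_eq] at hmem
  obtain ⟨w, hw0, hw1, hcm⟩ := hmem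
  rw [Finset.centerMass_eq_of_sum_1 _ _ hw1] at hcm
  have hs1 : s.1 = ∑ a ∈ A, w a * a.1 := by
    rw [← hcm, Prod.fst_sum]
    exact Finset.sum_congr rfl fun a _ => by simp [smul_eq_mul]
  have hs2 : s.2 = ∑ a ∈ A, w a * a.2 := by
    rw [← hcm, Prod.snd_sum]
    exact Finset.sum_congr rfl fun a _ => by simp [smul_eq_mul]
  set D := (Lm t p s).2 with hD
  have hDne : D ≠ 0 := ne_of_gt hs0
  have hL1 : (Lm t p s).1 = ∑ a ∈ A, w a * (Lm t p a).1 := by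
    simp only [Lm]
    have : ∀ a ∈ A, w a * (a.1 - t * a.2 - (p.1 - t * p.2))
        = w a * a.1 - t * (w a * a.2) - (p.1 - t * p.2) * w a := fun a _ => by ring
    rw [Finset.sum_congr rfl this, Finset.sum_sub_distrib, Finset.sum_sub_distrib,
      ← Finset.mul_sum, ← Finset.mul_sum, ← hs1, ← hs2, hw1]
    ring
  have hL2 : D = ∑ a ∈ A, w a * (Lm t p a).2 := by
    simp only [hD, Lm]
    have : ∀ a ∈ A, w a * (t * a.1 + a.2 - (t * p.1 + p.2))
        = t * (w a * a.1) + w a * a.2 - (t * p.1 + p.2) * w a := fun a _ => by ring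
    rw [Finset.sum_congr rfl this, Finset.sum_sub_distrib, Finset.sum_add_distrib,
      ← Finset.mul_sum, ← Finset.mul_sum, ← hs1, ← hs2, hw1]
    ring
  set w' : ℝ × ℝ → ℝ := fun a => w a * (Lm t p a).2 / D with hw'
  have hw'0 : ∀ a ∈ A, 0 ≤ w' a := fun a ha =>
    div_nonneg (mul_nonneg (hw0 a ha) (le_of_lt (hA a ha))) (le_of_lt hs0)
  have hsum' : ∑ a ∈ A, w' a = 1 := by
    simp only [hw']
    rw [← Finset.sum_div, ← hL2, div_self hDne]
  have hmem' := A.centerMass_mem_convexHull hw'0 (by rw [hsum']; exact one_pos)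
    (fun a ha => Set.mem_image_of_mem (Phi t p) (Finset.mem_coe.mpr ha))
  rw [Finset.centerMass_eq_of_sum_1 _ _ hsum'] at hmem'
  convert hmem' using 1
  apply Prod.ext
  · rw [Prod.fst_sum]
    simp only [Phi, Tm]
    have : ∀ a ∈ A, (w' a • ((Lm t p a).1 / (Lm t p a).2, -1 / (Lm t p a).2)).1
        = w a * (Lm t p a).1 / D := by
      intro a ha
      have hane : (Lm t p a).2 ≠ 0 := ne_of_gt (hA a ha)
      simp only [Prod.smul_fst, smul_eq_mul, hw']
      field_simp
    rw [Finset.sum_congr rfl this, ← Finset.sum_div, ← hL1]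
  · rw [Prod.snd_sum]
    simp only [Phi, Tm]
    have : ∀ a ∈ A, (w' a • ((Lm t p a).1 / (Lm t p a).2, -1 / (Lm t p a).2)).2
        = -(w a / D) := by
      intro a ha
      have hane : (Lm t p a).2 ≠ 0 := ne_of_gt (hA a ha)
      simp only [Prod.smul_snd, smul_eq_mul, hw']
      field_simp
    rw [Finset.sum_congr rfl this, Finset.sum_neg_distrib, ← Finset.sum_div, hw1]
    simp [hD, neg_div]

lemma seq_mono (tt : ℕ) (u : ℕ → ℝ) (hu : ∀ i, i + 1 < tt → u i < u (i + 1)) :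
    ∀ i j : ℕ, i < j → j < tt → u i < u j := by
  intro i j hij hjt
  induction j with
  | zero => omega
  | succ k ih =>
    rcases Nat.lt_succ_iff_lt_or_eq.mp hij with hik | hik
    · exact lt_trans (ih hik (by omega)) (hu k hjt)
    · subst hik; exact hu i hjt

lemma cap_sep (tt : ℕ) (u v sl : ℕ → ℝ)
    (hu : ∀ i, i + 1 < tt → u i < u (i + 1))
    (hstep : ∀ i, i + 1 < tt → v (i + 1) - v i = sl i * (u (i + 1) - u i))
    (hsl : ∀ i, i + 2 < tt → sl (i + 1) < sl i) :
    ∀ i < tt, ∃ m : ℝ, ∀ j < tt, j ≠ i → v j < v i + m * (u j - u i) := by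
  have umono := seq_mono tt u hu
  have slmono : ∀ i j : ℕ, i ≤ j → j + 1 < tt → sl j ≤ sl i := by
    intro i j hij hjt
    induction j with
    | zero => simp_all
    | succ k ih =>
      rcases Nat.lt_succ_iff_lt_or_eq.mp (Nat.lt_succ_of_le hij) with hik | hik
      · exact le_trans (le_of_lt (hsl k (by omega))) (ih (by omega) (by omega))
      · subst hik; rfl
  have up : ∀ i j : ℕ, i < j → j < tt → v j - v i ≤ sl i * (u j - u i) := by
    intro i j hij hjt
    induction j with
    | zero => omega
    | succ k ih =>
      rcases Nat.lt_succ_iff_lt_or_eq.mp hij with hik | hik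
      · have h1 := hstep k hjt
        have h2 := ih hik (by omega)
        have h3 : sl k ≤ sl i := slmono i k (le_of_lt hik) (by omega)
        have h4 : 0 < u (k + 1) - u k := sub_pos.mpr (hu k hjt)
        nlinarith
      · subst hik; rw [hstep i hjt]
  have down : ∀ i j : ℕ, i < j → j < tt → sl (j - 1) * (u j - u i) ≤ v j - v i := by
    intro i j hij hjt
    induction j with
    | zero => omega
    | succ k ih =>
      rcases Nat.lt_succ_iff_lt_or_eq.mp hij with hik | hik
      · have hk1 : 1 ≤ k := by omega
        have h1 := hstep k hjt
        have h2 := ih hik (by omega)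
        have h3 : sl k ≤ sl (k - 1) := by
          have := hsl (k - 1) (by omega)
          have hk : k - 1 + 1 = k := by omega
          rw [hk] at this
          exact le_of_lt this
        have h4 : 0 < u k - u i := sub_pos.mpr (umono i k hik (by omega))
        have h5 : (k + 1 : ℕ) - 1 = k := by omega
        rw [h5]
        nlinarith
      · subst hik
        have h5 : (i + 1 : ℕ) - 1 = i := by omega
        rw [h5, hstep i hjt]
  intro i hit
  by_cases hi0 : i = 0
  · subst hi0
    refine ⟨sl 0 + 1, ?_⟩
    intro j hjt hji
    have hij : 0 < j := Nat.pos_of_ne_zero hji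
    have h1 := up 0 j hij hjt
    have h2 : 0 < u j - u 0 := sub_pos.mpr (umono 0 j hij hjt)
    nlinarith
  · by_cases hit1 : i + 1 = tt
    · refine ⟨sl (i - 1) - 1, ?_⟩
      intro j hjt hji
      have hji' : j < i := by omega
      have h1 := down j i hji' hit
      have h2 : 0 < u i - u j := sub_pos.mpr (umono j i hji' hit)
      nlinarith
    · refine ⟨(sl i + sl (i - 1)) / 2, ?_⟩
      have hi1 : 1 ≤ i := by omega
      have hsllt : sl i < sl (i - 1) := by
        have := hsl (i - 1) (by omega)
        have hk : i - 1 + 1 = i := by omega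
        rw [hk] at this
        exact this
      intro j hjt hji
      rcases lt_or_gt_of_ne hji with hlt | hgt
      · have h1 := down j i hlt hit
        have h2 : 0 < u i - u j := sub_pos.mpr (umono j i hlt hit)
        nlinarith
      · have h1 := up i j hgt hjt
        have h2 : 0 < u j - u i := sub_pos.mpr (umono i j hgt hjt)
        nlinarith

lemma eqslope_cross (a b c : ℝ × ℝ) (hab : a.1 < b.1) (hbc : b.1 < c.1)
    (heq : ptSlope a b = ptSlope b c) : cross a b c = 0 := by
  have h1 : b.1 - a.1 ≠ 0 := ne_of_gt (sub_pos.mpr hab)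
  have h2 : c.1 - b.1 ≠ 0 := ne_of_gt (sub_pos.mpr hbc)
  rw [ptSlope, ptSlope, div_eq_div_iff h1 h2] at heq
  simp only [cross]
  nlinarith [heq]

end TV

end

/-- Tóth–Valtr reduction: if every `N`-point set in general position with
pairwise distinct x-coordinates contains `n` points in convex position or an
`(n-1)`-cap, then `ES(n) ≤ N + 1`. -/
theorem toth_valtr_reduction (n N : ℕ) (hn : 3 ≤ n) (hN : 1 ≤ N)
    (h : ∀ P : Finset (ℝ × ℝ), GeneralPosition P → DistinctX P → N ≤ P.card →
      (∃ S ⊆ P, S.card = n ∧ ConvexPosition S) ∨ (∃ q, IsGCap P (n - 1) q)) :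
    ∀ P : Finset (ℝ × ℝ), GeneralPosition P → N + 1 ≤ P.card →
      ∃ S ⊆ P, S.card = n ∧ ConvexPosition S := by
  intro P hGP hcard
  classical
  -- Step A: choose a direction parameter t making the functional injective on P
  obtain ⟨t, ht⟩ := Infinite.exists_notMem_finset
    ((P ×ˢ P).image (fun ab : (ℝ × ℝ) × (ℝ × ℝ) => (ab.2.2 - ab.1.2) / (ab.1.1 - ab.2.1)))
  have hinj : ∀ a ∈ P, ∀ b ∈ P, a ≠ b → t * a.1 + a.2 ≠ t * b.1 + b.2 := by
    intro a ha b hb hab heq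
    by_cases h1 : a.1 = b.1
    · refine hab (Prod.ext h1 ?_)
      have : t * a.1 = t * b.1 := by rw [h1]
      linarith
    · apply ht
      apply Finset.mem_image.mpr
      refine ⟨(a, b), Finset.mem_product.mpr ⟨ha, hb⟩, ?_⟩
      have hne : a.1 - b.1 ≠ 0 := sub_ne_zero.mpr h1
      rw [div_eq_iff hne]
      linarith
  -- Step B: the bottom point p
  have hPne : P.Nonempty := Finset.card_pos.mp (by omega)
  obtain ⟨p, hp, hpmin⟩ := P.exists_min_image (fun z : ℝ × ℝ => t * z.1 + z.2) hPne
  have hpstrict : ∀ q ∈ P, q ≠ p → t * p.1 + p.2 < t * q.1 + q.2 :=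
    fun q hq hqp => lt_of_le_of_ne (hpmin q hq) (hinj p hp q hq (Ne.symm hqp))
  have hLpos : ∀ q ∈ P.erase p, 0 < (TV.Lm t p q).2 := by
    intro q hq
    have h1 := hpstrict q (Finset.mem_of_mem_erase hq) (Finset.ne_of_mem_erase hq)
    simp only [TV.Lm]
    linarith
  -- injectivity
  have hLmInj : ∀ a b : ℝ × ℝ, TV.Lm t p a = TV.Lm t p b → a = b := by
    intro a b hab
    have e1 := congrArg Prod.fst hab
    have e2 := congrArg Prod.snd hab
    simp only [TV.Lm] at e1 e2
    have key : (1 + t ^ 2) * a.1 = (1 + t ^ 2) * b.1 := by linear_combination e1 + t * e2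
    have h11 : a.1 = b.1 := mul_left_cancel₀ (by positivity) key
    have h22 : a.2 = b.2 := by linear_combination e2 - t * h11
    exact Prod.ext h11 h22
  have hPhiInj : Set.InjOn (TV.Phi t p) ↑(P.erase p) := by
    intro a ha b hb hab
    have hya := hLpos a (Finset.mem_coe.mp ha)
    have hyb := hLpos b (Finset.mem_coe.mp hb)
    have e1 := congrArg Prod.fst hab
    have e2 := congrArg Prod.snd hab
    simp only [TV.Phi, TV.Tm] at e1 e2
    rw [div_eq_div_iff (ne_of_gt hya) (ne_of_gt hyb)] at e2
    have hy : (TV.Lm t p a).2 = (TV.Lm t p b).2 := by linarith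
    rw [div_eq_div_iff (ne_of_gt hya) (ne_of_gt hyb), hy] at e1
    have hx : (TV.Lm t p a).1 = (TV.Lm t p b).1 :=
      mul_right_cancel₀ (ne_of_gt hyb) e1
    exact hLmInj a b (Prod.ext hx hy)
  set P' := (P.erase p).image (TV.Phi t p) with hP'
  have hcard' : P'.card = P.card - 1 := by
    rw [hP', Finset.card_image_of_injOn hPhiInj, Finset.card_erase_of_mem hp]
  have hmemP' : ∀ x ∈ P', ∃ a ∈ P.erase p, TV.Phi t p a = x := by
    intro x hx
    rw [hP', Finset.mem_image] at hx
    exact hx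
  -- general position of P'
  have hGP' : GeneralPosition P' := by
    intro p1 h1 p2 h2 p3 h3 h12 h13 h23 hcol
    obtain ⟨a, ha, rfl⟩ := hmemP' p1 h1
    obtain ⟨b, hb, rfl⟩ := hmemP' p2 h2
    obtain ⟨c, hc, rfl⟩ := hmemP' p3 h3
    have hab : a ≠ b := fun hh => h12 (by rw [hh])
    have hac : a ≠ c := fun hh => h13 (by rw [hh])
    have hbc : b ≠ c := fun hh => h23 (by rw [hh])
    have h0 := (TV.collinear_iff_cross _ _ _).mp hcol
    have hcT := TV.crossT (TV.Lm t p a) (TV.Lm t p b) (TV.Lm t p c)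
      (ne_of_gt (hLpos a ha)) (ne_of_gt (hLpos b hb)) (ne_of_gt (hLpos c hc))
    have hprod : TV.cross (TV.Lm t p a) (TV.Lm t p b) (TV.Lm t p c) = 0 := by
      rw [← hcT]
      simp only [TV.Phi] at h0
      rw [h0, zero_mul]
    rw [TV.crossL] at hprod
    have hcc : TV.cross a b c = 0 :=
      (mul_eq_zero.mp hprod).resolve_left (by positivity)
    exact hGP a (Finset.mem_of_mem_erase ha) b (Finset.mem_of_mem_erase hb)
      c (Finset.mem_of_mem_erase hc) hab hac hbc
      ((TV.collinear_iff_cross a b c).mpr hcc)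
  -- distinct x-coordinates of P'
  have hDX' : DistinctX P' := by
    intro p1 h1 p2 h2 hne heq
    obtain ⟨a, ha, rfl⟩ := hmemP' p1 h1
    obtain ⟨b, hb, rfl⟩ := hmemP' p2 h2
    have hab : a ≠ b := fun hh => hne (by rw [hh])
    have hya := hLpos a ha
    have hyb := hLpos b hb
    simp only [TV.Phi, TV.Tm] at heq
    rw [div_eq_div_iff (ne_of_gt hya) (ne_of_gt hyb)] at heq
    have hLpp : TV.Lm t p p = (0, 0) := by simp [TV.Lm]
    have h00 : TV.cross (TV.Lm t p p) (TV.Lm t p a) (TV.Lm t p b) = 0 := by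
      simp [TV.cross, hLpp]
      linarith
    rw [TV.crossL] at h00
    have hcc : TV.cross p a b = 0 :=
      (mul_eq_zero.mp h00).resolve_left (by positivity)
    exact hGP p hp a (Finset.mem_of_mem_erase ha) b (Finset.mem_of_mem_erase hb)
      (Ne.symm (Finset.ne_of_mem_erase ha)) (Ne.symm (Finset.ne_of_mem_erase hb)) hab
      ((TV.collinear_iff_cross p a b).mpr hcc)
  rcases h P' hGP' hDX' (by omega) with ⟨S', hS'sub, hS'card, hS'conv⟩ | ⟨q, hq1, hq2, hq3⟩
  · -- Case 1: convex position set in P'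
    set S := (P.erase p).filter (fun a => TV.Phi t p a ∈ S') with hS
    have hSsubE : S ⊆ P.erase p := Finset.filter_subset _ _
    have hSsub : S ⊆ P := hSsubE.trans (Finset.erase_subset p P)
    have himg : S.image (TV.Phi t p) = S' := by
      apply Finset.ext
      intro x
      constructor
      · intro hx
        rw [Finset.mem_image] at hx
        obtain ⟨a, ha, rfl⟩ := hx
        exact (Finset.mem_filter.mp ha).2
      · intro hx
        obtain ⟨a, ha, rfl⟩ := hmemP' x (hS'sub hx)
        exact Finset.mem_image_of_mem _ (Finset.mem_filter.mpr ⟨ha, hx⟩)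
    have hScard : S.card = n := by
      rw [← hS'card, ← himg]
      exact (Finset.card_image_of_injOn (hPhiInj.mono (by exact_mod_cast hSsubE))).symm
    refine ⟨S, hSsub, hScard, ?_⟩
    intro s hs hmem
    have hsE : s ∈ P.erase p := hSsubE hs
    rw [← Finset.coe_erase] at hmem
    have hpush := TV.push t p (S.erase s) s
      (fun x hx => hLpos x (hSsubE (Finset.mem_of_mem_erase hx))) (hLpos s hsE) hmem
    have hsubset : TV.Phi t p '' ↑(S.erase s) ⊆ (↑S' : Set (ℝ × ℝ)) \ {TV.Phi t p s} := by
      rintro x ⟨b, hbE, rfl⟩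
      have hbE' := Finset.mem_coe.mp hbE
      have hbS := Finset.mem_of_mem_erase hbE'
      constructor
      · exact Finset.mem_coe.mpr ((Finset.mem_filter.mp hbS).2)
      · simp only [Set.mem_singleton_iff]
        intro hPhieq
        exact (Finset.ne_of_mem_erase hbE')
          (hPhiInj (Finset.mem_coe.mpr (hSsubE hbS)) (Finset.mem_coe.mpr hsE) hPhieq)
    exact hS'conv (TV.Phi t p s)
      (by rw [← himg]; exact Finset.mem_image_of_mem _ hs)
      (convexHull_mono hsubset hpush)
  · -- Case 2: an (n-1)-cap in P'
    have htt2 : 2 ≤ n - 1 := by omega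
    have hlift : ∀ i, ∃ a, i < n - 1 → a ∈ P.erase p ∧ TV.Phi t p a = q i := by
      intro i
      by_cases hi : i < n - 1
      · obtain ⟨a, ha, hphi⟩ := hmemP' (q i) (hq1 i hi)
        exact ⟨a, fun _ => ⟨ha, hphi⟩⟩
      · exact ⟨(0, 0), fun hh => absurd hh hi⟩
    choose a ha using hlift
    have haE : ∀ i, i < n - 1 → a i ∈ P.erase p := fun i hi => (ha i hi).1
    have haPhi : ∀ i, i < n - 1 → TV.Phi t p (a i) = q i := fun i hi => (ha i hi).2
    have hstep : ∀ i, i + 1 < n - 1 →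
        (q (i + 1)).2 - (q i).2 = ptSlope (q i) (q (i + 1)) * ((q (i + 1)).1 - (q i).1) := by
      intro i hi
      have hx := hq2 i hi
      rw [ptSlope, div_mul_cancel₀ _ (ne_of_gt (sub_pos.mpr hx))]
    have hqij : ∀ i j, i < j → j < n - 1 → (q i).1 < (q j).1 :=
      TV.seq_mono (n - 1) (fun i => (q i).1) hq2
    have hqne : ∀ i j, i < n - 1 → j < n - 1 → i ≠ j → q i ≠ q j := by
      intro i j hi hj hij hqq
      rcases lt_or_gt_of_ne hij with hlt | hgt
      · exact absurd (congrArg Prod.fst hqq) (ne_of_lt (hqij i j hlt hj))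
      · exact absurd (congrArg Prod.fst hqq) (ne_of_gt (hqij j i hgt hi))
    have hslst : ∀ i, i + 2 < n - 1 →
        ptSlope (q (i + 1)) (q (i + 1 + 1)) < ptSlope (q i) (q (i + 1)) := by
      intro i hi
      have hle : ptSlope (q (i + 1)) (q (i + 2)) ≤ ptSlope (q i) (q (i + 1)) := hq3 i hi
      have h21 : i + 1 + 1 = i + 2 := by omega
      rw [h21]
      refine lt_of_le_of_ne hle ?_
      intro heqs
      have hcr := TV.eqslope_cross (q i) (q (i + 1)) (q (i + 2))
        (hq2 i (by omega)) (by
          have := hq2 (i + 1) (by omega)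
          rwa [h21] at this) heqs.symm
      exact hGP' (q i) (hq1 i (by omega)) (q (i + 1)) (hq1 (i + 1) (by omega))
        (q (i + 2)) (hq1 (i + 2) (by omega))
        (hqne i (i + 1) (by omega) (by omega) (by omega))
        (hqne i (i + 2) (by omega) (by omega) (by omega))
        (hqne (i + 1) (i + 2) (by omega) (by omega) (by omega))
        ((TV.collinear_iff_cross _ _ _).mpr hcr)
    have hcsep := TV.cap_sep (n - 1) (fun i => (q i).1) (fun i => (q i).2)
      (fun i => ptSlope (q i) (q (i + 1))) hq2 hstep hslst
    set S := insert p ((Finset.range (n - 1)).image a) with hS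
    have hainj : ∀ i j, i < n - 1 → j < n - 1 → a i = a j → i = j := by
      intro i j hi hj hij
      by_contra hne
      exact hqne i j hi hj hne (by rw [← haPhi i hi, ← haPhi j hj, hij])
    have hpnot : p ∉ (Finset.range (n - 1)).image a := by
      rw [Finset.mem_image]
      rintro ⟨i, hi, hip⟩
      exact (Finset.ne_of_mem_erase (haE i (Finset.mem_range.mp hi))) hip
    have hScard : S.card = n := by
      rw [hS, Finset.card_insert_of_notMem hpnot, Finset.card_image_of_injOn
        (fun i hi j hj hij => hainj i j (Finset.mem_range.mp (Finset.mem_coe.mp hi))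
          (Finset.mem_range.mp (Finset.mem_coe.mp hj)) hij), Finset.card_range]
      omega
    have hSsub : S ⊆ P := by
      rw [hS]
      apply Finset.insert_subset hp
      intro x hx
      rw [Finset.mem_image] at hx
      obtain ⟨i, hi, rfl⟩ := hx
      exact Finset.mem_of_mem_erase (haE i (Finset.mem_range.mp hi))
    refine ⟨S, hSsub, hScard, ?_⟩
    have hmemS : ∀ x ∈ S, x = p ∨ ∃ i, i < n - 1 ∧ x = a i := by
      intro x hx
      rw [hS, Finset.mem_insert] at hx
      rcases hx with rfl | hx
      · exact Or.inl rfl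
      · rw [Finset.mem_image] at hx
        obtain ⟨i, hi, rfl⟩ := hx
        exact Or.inr ⟨i, Finset.mem_range.mp hi, rfl⟩
    intro s hsS
    rcases hmemS s hsS with rfl | ⟨i, hi, rfl⟩
    · -- s = p : separate by the downward functional
      apply TV.sep_lemma (-t) (-1)
      intro x hx
      obtain ⟨hxS, hxne⟩ := hx
      rcases hmemS x (Finset.mem_coe.mp hxS) with rfl | ⟨j, hj, rfl⟩
      · exact absurd (Set.mem_singleton _) hxne
      · have hlt := hpstrict (a j) (Finset.mem_of_mem_erase (haE j hj))
          (Finset.ne_of_mem_erase (haE j hj))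
        linarith
    · -- s = a i : separate by a line through q i in the transformed plane
      obtain ⟨m, hm⟩ := hcsep i hi
      set B2 : ℝ := (q i).2 - m * (q i).1 with hB2
      have hGaj : ∀ j, j < n - 1 → m * (TV.Lm t p (a j)).1 + B2 * (TV.Lm t p (a j)).2
          = (TV.Lm t p (a j)).2 * (m * (q j).1 + B2 - (q j).2) - 1 := by
        intro j hj
        have hyj := hLpos (a j) (haE j hj)
        have hphi := haPhi j hj
        have h1 := congrArg Prod.fst hphi
        have h2 := congrArg Prod.snd hphi
        simp only [TV.Phi, TV.Tm] at h1 h2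
        have hw1 : (TV.Lm t p (a j)).1 = (q j).1 * (TV.Lm t p (a j)).2 := by
          rw [← h1]
          field_simp
        have hw2 : (q j).2 * (TV.Lm t p (a j)).2 = -1 := by
          rw [← h2]
          field_simp
        rw [hw1]
        linear_combination hw2
      have hGp : m * (TV.Lm t p p).1 + B2 * (TV.Lm t p p).2 = 0 := by
        simp [TV.Lm]
      have hGai : m * (TV.Lm t p (a i)).1 + B2 * (TV.Lm t p (a i)).2 = -1 := by
        rw [hGaj i hi]
        have hz : m * (q i).1 + B2 - (q i).2 = 0 := by rw [hB2]; ring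
        rw [hz]
        ring
      have hlinG : ∀ z : ℝ × ℝ, m * (TV.Lm t p z).1 + B2 * (TV.Lm t p z).2
          = (m + B2 * t) * z.1 + (B2 - m * t) * z.2
            - (m * (p.1 - t * p.2) + B2 * (t * p.1 + p.2)) := by
        intro z
        simp only [TV.Lm]
        ring
      apply TV.sep_lemma (-(m + B2 * t)) (-(B2 - m * t))
      intro x hx
      obtain ⟨hxS, hxne⟩ := hx
      have hnex : x ≠ a i := by simpa using hxne
      have hGx : -1 < m * (TV.Lm t p x).1 + B2 * (TV.Lm t p x).2 := by
        rcases hmemS x (Finset.mem_coe.mp hxS) with rfl | ⟨j, hj, rfl⟩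
        · rw [hGp]; norm_num
        · have hji : j ≠ i := fun hh => hnex (by rw [hh])
          have hvj := hm j hj hji
          have hpos2 : 0 < m * (q j).1 + B2 - (q j).2 := by
            simp only [hB2]
            nlinarith [hvj]
          rw [hGaj j hj]
          have hyj := hLpos (a j) (haE j hj)
          nlinarith [mul_pos hyj hpos2]
      have e1 := hlinG x
      have e2 := hlinG (a i)
      nlinarith [e1, e2, hGx, hGai]
end

section
/- Let n ≥ 6 and let P be a finite set of points in the plane in general position with pairwise distinct x-coordinates, such that P contains no n points in convex position, no n-cup, and no (n−1)-cap. Suppose a point q ∈ P is simultaneously: the last point of an (n−2)-cup V = (v₁,…,v_{n−3}, q), the first point of an (n−2)-cap U = (q, u₂,…,u_{n−2}), and the first point of an (n−1)-cup W = (q, w₂,…,w_{n−1}). Then u₂ = w_{n−1}. -/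
section SlopeAux
variable {a b c p r : ℝ × ℝ} {s : ℝ}

lemma slope_lt_left (hab : a.1 < b.1) (hbc : b.1 < c.1) :
    ptSlope a b < ptSlope b c ↔ ptSlope a b < ptSlope a c := by
  unfold ptSlope
  rw [div_lt_div_iff₀ (by linarith) (by linarith), div_lt_div_iff₀ (by linarith) (by linarith)]
  constructor <;> intro h <;> nlinarith

lemma slope_lt_right (hab : a.1 < b.1) (hbc : b.1 < c.1) :
    ptSlope a b < ptSlope b c ↔ ptSlope a c < ptSlope b c := by
  unfold ptSlope
  rw [div_lt_div_iff₀ (by linarith) (by linarith), div_lt_div_iff₀ (by linarith) (by linarith)]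
  constructor <;> intro h <;> nlinarith

lemma slope_le_left (hab : a.1 < b.1) (hbc : b.1 < c.1) :
    ptSlope a b ≤ ptSlope b c ↔ ptSlope a b ≤ ptSlope a c := by
  unfold ptSlope
  rw [div_le_div_iff₀ (by linarith) (by linarith), div_le_div_iff₀ (by linarith) (by linarith)]
  constructor <;> intro h <;> nlinarith

lemma slope_le_right (hab : a.1 < b.1) (hbc : b.1 < c.1) :
    ptSlope a b ≤ ptSlope b c ↔ ptSlope a c ≤ ptSlope b c := by
  unfold ptSlope
  rw [div_le_div_iff₀ (by linarith) (by linarith), div_le_div_iff₀ (by linarith) (by linarith)]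
  constructor <;> intro h <;> nlinarith

/-- middle below the chord ⇒ right slope bigger than the chord -/
lemma slope_S3 (hab : a.1 < b.1) (hbc : b.1 < c.1) (h : ptSlope a b < ptSlope a c) :
    ptSlope a c < ptSlope b c :=
  (slope_lt_right hab hbc).1 ((slope_lt_left hab hbc).2 h)

/-- middle above the chord ⇒ right slope smaller than the chord -/
lemma slope_S4 (hab : a.1 < b.1) (hbc : b.1 < c.1) (h : ptSlope a c < ptSlope a b) :
    ptSlope b c < ptSlope a c := by
  unfold ptSlope at h ⊢
  rw [div_lt_div_iff₀ (by linarith) (by linarith)] at h ⊢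
  nlinarith

lemma lin_lt_of_lt_slope (h : p.1 < r.1) (hs : s < ptSlope p r) :
    p.2 - s * p.1 < r.2 - s * r.1 := by
  unfold ptSlope at hs
  rw [lt_div_iff₀ (by linarith)] at hs
  nlinarith

lemma lin_lt_of_slope_lt (h : p.1 < r.1) (hs : ptSlope p r < s) :
    r.2 - s * r.1 < p.2 - s * p.1 := by
  unfold ptSlope at hs
  rw [div_lt_iff₀ (by linarith)] at hs
  nlinarith

lemma above_interp {A B u : ℝ × ℝ} (hAu : A.1 < u.1) (huB : u.1 < B.1)
    (hA : p.2 - s * p.1 < A.2 - s * A.1) (hB : p.2 - s * p.1 < B.2 - s * B.1)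
    (hu : ptSlope A B < ptSlope A u) :
    p.2 - s * p.1 < u.2 - s * u.1 := by
  have hAB : A.1 < B.1 := lt_trans hAu huB
  unfold ptSlope at hu
  rw [div_lt_div_iff₀ (by linarith) (by linarith)] at hu
  nlinarith [mul_pos (sub_pos.2 hAu) (sub_pos.2 huB)]

lemma collinear_of_slope_eq (h1 : p.1 < a.1) (h2 : p.1 < r.1)
    (h : ptSlope p a = ptSlope p r) : Collinear ℝ ({p, a, r} : Set (ℝ × ℝ)) := by
  rw [collinear_iff_of_mem (Set.mem_insert p _)]
  refine ⟨a - p, ?_⟩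
  intro x hxm
  simp only [Set.mem_insert_iff, Set.mem_singleton_iff] at hxm
  have ha : a.1 - p.1 ≠ 0 := by linarith
  have hr : r.1 - p.1 ≠ 0 := by linarith
  unfold ptSlope at h
  rcases hxm with rfl | rfl | rfl
  · exact ⟨0, by simp⟩
  · exact ⟨1, by simp⟩
  · refine ⟨(x.1 - p.1) / (a.1 - p.1), ?_⟩
    simp only [vadd_eq_add, Prod.ext_iff, Prod.fst_add, Prod.snd_add, Prod.smul_fst,
      Prod.smul_snd, Prod.fst_sub, Prod.snd_sub, smul_eq_mul]
    constructor
    · field_simp; ring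
    · field_simp at h ⊢
      nlinarith [h]

/-- non-collinear + cup-shaped gives a strict slope increase -/
lemma strict_slope (hab : a.1 < b.1) (hbc : b.1 < c.1)
    (hle : ptSlope a b ≤ ptSlope b c) (hnc : ¬ Collinear ℝ ({a, b, c} : Set (ℝ × ℝ))) :
    ptSlope a b < ptSlope b c := by
  rcases lt_or_eq_of_le hle with h | h
  · exact h
  · exfalso
    apply hnc
    have h1 : ptSlope a b ≤ ptSlope a c := (slope_le_left hab hbc).1 hle
    have h2 : ptSlope a c ≤ ptSlope b c := (slope_le_right hab hbc).1 hle
    exact collinear_of_slope_eq hab (lt_trans hab hbc) (le_antisymm h1 (by rw [← h] at h2; exact h2))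

end SlopeAux

section Cup
variable {N : ℕ} {w : ℕ → ℝ × ℝ}

lemma cup_xlt (hm : ∀ i, i + 1 < N → (w i).1 < (w (i + 1)).1) :
    ∀ {i j}, i < j → j < N → (w i).1 < (w j).1 := by
  intro i j hij hj
  induction j with
  | zero => omega
  | succ j ih =>
    rcases Nat.lt_or_ge i j with h | h
    · exact lt_trans (ih h (by omega)) (hm j (by omega))
    · have : i = j := by omega
      subst this
      exact hm i (by omega)

lemma cup_chord_ub (hm : ∀ i, i + 1 < N → (w i).1 < (w (i + 1)).1)
    (hs : ∀ i, i + 2 < N → ptSlope (w i) (w (i + 1)) ≤ ptSlope (w (i + 1)) (w (i + 2))) :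
    ∀ {i j}, i ≤ j → j + 1 < N → ptSlope (w i) (w (j + 1)) ≤ ptSlope (w j) (w (j + 1)) := by
  intro i j hij hj
  induction j with
  | zero =>
    have hi0 : i = 0 := by omega
    subst hi0; exact le_rfl
  | succ j ih =>
    rcases Nat.lt_or_ge i (j + 1) with h | h
    · have h1 : ptSlope (w i) (w (j + 1)) ≤ ptSlope (w j) (w (j + 1)) := ih (by omega) (by omega)
      have h2 : ptSlope (w j) (w (j + 1)) ≤ ptSlope (w (j + 1)) (w (j + 2)) := hs j (by omega)
      have hx1 : (w i).1 < (w (j + 1)).1 := cup_xlt hm h (by omega)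
      have hx2 : (w (j + 1)).1 < (w (j + 2)).1 := hm (j + 1) (by omega)
      exact (slope_le_right hx1 hx2).1 (le_trans h1 h2)
    · have : i = j + 1 := by omega
      subst this; exact le_rfl

lemma cup_chord_lb (hm : ∀ i, i + 1 < N → (w i).1 < (w (i + 1)).1)
    (hs : ∀ i, i + 2 < N → ptSlope (w i) (w (i + 1)) ≤ ptSlope (w (i + 1)) (w (i + 2))) :
    ∀ {i j}, i ≤ j → j + 1 < N → ptSlope (w i) (w (i + 1)) ≤ ptSlope (w i) (w (j + 1)) := by
  intro i j hij hj
  induction j with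
  | zero =>
    have hi0 : i = 0 := by omega
    subst hi0; exact le_rfl
  | succ j ih =>
    rcases Nat.lt_or_ge i (j + 1) with h | h
    · have h1 : ptSlope (w i) (w (i + 1)) ≤ ptSlope (w i) (w (j + 1)) := ih (by omega) (by omega)
      have h2 : ptSlope (w i) (w (j + 1)) ≤ ptSlope (w j) (w (j + 1)) :=
        cup_chord_ub hm hs (by omega) (by omega)
      have h3 : ptSlope (w j) (w (j + 1)) ≤ ptSlope (w (j + 1)) (w (j + 2)) := hs j (by omega)
      have hx1 : (w i).1 < (w (j + 1)).1 := cup_xlt hm h (by omega)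
      have hx2 : (w (j + 1)).1 < (w (j + 2)).1 := hm (j + 1) (by omega)
      have := (slope_le_left hx1 hx2).1 (le_trans h2 h3)
      linarith
    · have : i = j + 1 := by omega
      subst this; exact le_rfl

/-- any three points of a cup form a cup -/
lemma cup_slope3 (hm : ∀ i, i + 1 < N → (w i).1 < (w (i + 1)).1)
    (hs : ∀ i, i + 2 < N → ptSlope (w i) (w (i + 1)) ≤ ptSlope (w (i + 1)) (w (i + 2))) :
    ∀ {i j k}, i < j → j < k → k < N → ptSlope (w i) (w j) ≤ ptSlope (w j) (w k) := by
  intro i j k hij hjk hk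
  obtain ⟨j', rfl⟩ : ∃ j', j = j' + 1 := ⟨j - 1, by omega⟩
  obtain ⟨k', rfl⟩ : ∃ k', k = k' + 1 := ⟨k - 1, by omega⟩
  calc ptSlope (w i) (w (j' + 1)) ≤ ptSlope (w j') (w (j' + 1)) :=
        cup_chord_ub hm hs (by omega) (by omega)
    _ ≤ ptSlope (w (j' + 1)) (w (j' + 1 + 1)) := hs j' (by omega)
    _ ≤ ptSlope (w (j' + 1)) (w (k' + 1)) := cup_chord_lb hm hs (by omega) (by omega)

/-- chords from a fixed point are monotone -/
lemma cup_chord_mono (hm : ∀ i, i + 1 < N → (w i).1 < (w (i + 1)).1)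
    (hs : ∀ i, i + 2 < N → ptSlope (w i) (w (i + 1)) ≤ ptSlope (w (i + 1)) (w (i + 2))) :
    ∀ {i j k}, i < j → j < k → k < N → ptSlope (w i) (w j) ≤ ptSlope (w i) (w k) := by
  intro i j k hij hjk hk
  have h := cup_slope3 hm hs hij hjk hk
  exact (slope_le_left (cup_xlt hm hij (by omega)) (cup_xlt hm hjk hk)).1 h

/-- chords into a fixed point are antitone -/
lemma cup_chord_mono' (hm : ∀ i, i + 1 < N → (w i).1 < (w (i + 1)).1)
    (hs : ∀ i, i + 2 < N → ptSlope (w i) (w (i + 1)) ≤ ptSlope (w (i + 1)) (w (i + 2))) :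
    ∀ {i j k}, i < j → j < k → k < N → ptSlope (w i) (w k) ≤ ptSlope (w j) (w k) := by
  intro i j k hij hjk hk
  have h := cup_slope3 hm hs hij hjk hk
  exact (slope_le_right (cup_xlt hm hij (by omega)) (cup_xlt hm hjk hk)).1 h

end Cup

lemma not_mem_hull_of_lin (S : Finset (ℝ × ℝ)) (p : ℝ × ℝ) (A B : ℝ)
    (h : ∀ x ∈ S, x ≠ p → A * p.1 + B * p.2 < A * x.1 + B * x.2) :
    p ∉ convexHull ℝ ((S : Set (ℝ × ℝ)) \ {p}) := by
  have hlin : IsLinearMap ℝ (fun v : ℝ × ℝ => A * v.1 + B * v.2) := by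
    constructor
    · intro x y; simp only [Prod.fst_add, Prod.snd_add]; ring
    · intro c x; simp only [Prod.smul_fst, Prod.smul_snd, smul_eq_mul]; ring
  intro hmem
  have hsub : convexHull ℝ ((S : Set (ℝ × ℝ)) \ {p}) ⊆
      {x : ℝ × ℝ | A * p.1 + B * p.2 < A * x.1 + B * x.2} := by
    apply convexHull_min
    · rintro x ⟨hxS, hxp⟩
      exact h x (by exact_mod_cast hxS) (by simpa using hxp)
    · exact convex_halfSpace_gt hlin _
  have := hsub hmem
  simp only [Set.mem_setOf_eq] at this
  exact lt_irrefl _ this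

set_option maxHeartbeats 2000000 in
/-- Claim 1: if `P` contains no `n` points in convex position, no `n`-cup and no
`(n-1)`-cap, and `q ∈ P` is the last point of an `(n-2)`-cup `V`, the first
point of an `(n-2)`-cap `U = (q, u₂, …, u_{n-2})` and the first point of an
`(n-1)`-cup `W = (q, w₂, …, w_{n-1})`, then `u₂ = w_{n-1}`. -/
theorem mate_unique (n : ℕ) (hn : 6 ≤ n) (P : Finset (ℝ × ℝ))
    (hgp : GeneralPosition P) (hx : DistinctX P)
    (hconv : ¬ ∃ S ⊆ P, S.card = n ∧ ConvexPosition S)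
    (hcup : ¬ ∃ c, IsGCup P n c) (hcap : ¬ ∃ c, IsGCap P (n - 1) c)
    (q : ℝ × ℝ) (V U W : ℕ → ℝ × ℝ)
    (hV : IsGCup P (n - 2) V) (hVq : V (n - 3) = q)
    (hU : IsGCap P (n - 2) U) (hUq : U 0 = q)
    (hW : IsGCup P (n - 1) W) (hWq : W 0 = q) :
    U 1 = W (n - 2) := by
  obtain ⟨k, rfl⟩ : ∃ k, n = k + 6 := ⟨n - 6, by omega⟩
  have e1 : k + 6 - 1 = k + 5 := by omega
  have e2 : k + 6 - 2 = k + 4 := by omega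
  have e3 : k + 6 - 3 = k + 3 := by omega
  rw [e2] at hV hU ⊢
  rw [e3] at hVq
  rw [e1] at hW hcap
  subst hWq
  obtain ⟨hVm, hVx, hVs⟩ := hV
  obtain ⟨hUm, hUx, hUs⟩ := hU
  obtain ⟨hWm, hWx, hWs⟩ := hW
  -- basic facts
  have hWlt : ∀ {i j}, i < j → j < k + 5 → (W i).1 < (W j).1 := fun h1 h2 => cup_xlt hWx h1 h2
  have hVlt : ∀ {i j}, i < j → j < k + 4 → (V i).1 < (V j).1 := fun h1 h2 => cup_xlt hVx h1 h2
  have hqP : W 0 ∈ P := hWm 0 (by omega)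
  have huP : U 1 ∈ P := hUm 1 (by omega)
  have hxqu : (W 0).1 < (U 1).1 := by
    have := hUx 0 (by omega)
    rwa [hUq] at this
  have hxu12 : (U 1).1 < (U 2).1 := hUx 1 (by omega)
  have htu : ptSlope (U 1) (U 2) ≤ ptSlope (W 0) (U 1) := by
    have := hUs 0 (by omega)
    rwa [hUq] at this
  have hxvq : (V (k + 2)).1 < (W 0).1 := by
    have := hVx (k + 2) (by omega)
    rwa [hVq] at this
  -- Fact 1 : a < t
  have hat : ptSlope (V (k + 2)) (W 0) < ptSlope (W 0) (U 1) := by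
    by_contra hcon
    push_neg at hcon
    apply hcap
    refine ⟨fun i => match i with | 0 => V (k + 2) | (j + 1) => U j, ?_, ?_, ?_⟩
    · intro i hi
      match i with
      | 0 => exact hVm (k + 2) (by omega)
      | (j + 1) => exact hUm j (by omega)
    · intro i hi
      match i with
      | 0 => show (V (k + 2)).1 < (U 0).1; rw [hUq]; exact hxvq
      | (j + 1) => exact hUx j (by omega)
    · intro i hi
      match i with
      | 0 => show ptSlope (U 0) (U 1) ≤ ptSlope (V (k + 2)) (U 0); rw [hUq]; exact hcon
      | (j + 1) => exact hUs j (by omega)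
  -- Fact 2 : chord (q, W (k+3)) < a
  have hac : ptSlope (W 0) (W (k + 3)) < ptSlope (V (k + 2)) (W 0) := by
    by_contra hcon
    push_neg at hcon
    apply hcup
    refine ⟨fun i => if i = k + 4 then W (k + 3) else if i = k + 5 then W (k + 4) else V i,
      ?_, ?_, ?_⟩
    · intro i hi
      dsimp only
      by_cases h4 : i = k + 4
      · rw [if_pos h4]; exact hWm (k + 3) (by omega)
      · rw [if_neg h4]
        by_cases h5 : i = k + 5
        · rw [if_pos h5]; exact hWm (k + 4) (by omega)
        · rw [if_neg h5]; exact hVm i (by omega)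
    · intro i hi
      dsimp only
      by_cases h4 : i = k + 4
      · subst h4
        rw [if_pos rfl, if_neg (by omega : ¬ (k + 4 + 1 = k + 4)), if_pos rfl]
        exact hWlt (by omega) (by omega)
      · by_cases h3 : i = k + 3
        · subst h3
          rw [if_neg (by omega : ¬ (k + 3 = k + 4)), if_neg (by omega : ¬ (k + 3 = k + 5)),
            if_pos (by omega : k + 3 + 1 = k + 4), hVq]
          exact hWlt (by omega) (by omega)
        · rw [if_neg (by omega : ¬ (i = k + 4)), if_neg (by omega : ¬ (i = k + 5)),
            if_neg (by omega : ¬ (i + 1 = k + 4)), if_neg (by omega : ¬ (i + 1 = k + 5))]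
          exact hVx i (by omega)
    · intro i hi
      dsimp only
      by_cases h3 : i = k + 3
      · subst h3
        rw [if_neg (by omega : ¬ (k + 3 = k + 4)), if_neg (by omega : ¬ (k + 3 = k + 5)),
          if_pos (by omega : k + 3 + 1 = k + 4),
          if_neg (by omega : ¬ (k + 3 + 2 = k + 4)), if_pos (by omega : k + 3 + 2 = k + 5), hVq]
        exact cup_slope3 hWx hWs (by omega) (by omega) (by omega)
      · by_cases h2' : i = k + 2
        · subst h2'
          rw [if_neg (by omega : ¬ (k + 2 = k + 4)), if_neg (by omega : ¬ (k + 2 = k + 5)),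
            if_neg (by omega : ¬ (k + 2 + 1 = k + 4)), if_neg (by omega : ¬ (k + 2 + 1 = k + 5)),
            if_pos (by omega : k + 2 + 2 = k + 4)]
          show ptSlope (V (k + 2)) (V (k + 3)) ≤ ptSlope (V (k + 3)) (W (k + 3))
          rw [hVq]
          exact hcon
        · rw [if_neg (by omega : ¬ (i = k + 4)), if_neg (by omega : ¬ (i = k + 5)),
            if_neg (by omega : ¬ (i + 1 = k + 4)), if_neg (by omega : ¬ (i + 1 = k + 5)),
            if_neg (by omega : ¬ (i + 2 = k + 4)), if_neg (by omega : ¬ (i + 2 = k + 5))]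
          exact hVs i (by omega)
  have hact : ptSlope (W 0) (W (k + 3)) < ptSlope (W 0) (U 1) := lt_trans hac hat
  -- strict edge slopes (general position)
  have hedge : ∀ j, j + 2 < k + 5 →
      ptSlope (W j) (W (j + 1)) < ptSlope (W (j + 1)) (W (j + 2)) := by
    intro j hj
    refine strict_slope (hWx j (by omega)) (hWx (j + 1) (by omega)) (hWs j hj) ?_
    refine hgp (W j) (hWm j (by omega)) (W (j + 1)) (hWm (j + 1) (by omega))
      (W (j + 2)) (hWm (j + 2) (by omega)) ?_ ?_ ?_
    · exact fun h => absurd (congrArg Prod.fst h) (ne_of_lt (hWlt (by omega) (by omega)))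
    · exact fun h => absurd (congrArg Prod.fst h) (ne_of_lt (hWlt (by omega) (by omega)))
    · exact fun h => absurd (congrArg Prod.fst h) (ne_of_lt (hWlt (by omega) (by omega)))
  -- strict chords to the last point
  have hchordC : ∀ i, 1 ≤ i → i ≤ k + 3 →
      ptSlope (W 0) (W i) < ptSlope (W 0) (W (k + 4)) := by
    intro i h1 h2
    rcases lt_or_eq_of_le (cup_chord_mono hWx hWs (show 0 < i by omega)
      (show i < k + 4 by omega) (by omega)) with h | h
    · exact h
    · exfalso
      refine hgp (W 0) hqP (W i) (hWm i (by omega)) (W (k + 4)) (hWm _ (by omega)) ?_ ?_ ?_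
        (collinear_of_slope_eq (hWlt (by omega) (by omega)) (hWlt (by omega) (by omega)) h)
      · exact fun hh => absurd (congrArg Prod.fst hh) (ne_of_lt (hWlt (by omega) (by omega)))
      · exact fun hh => absurd (congrArg Prod.fst hh) (ne_of_lt (hWlt (by omega) (by omega)))
      · exact fun hh => absurd (congrArg Prod.fst hh) (ne_of_lt (hWlt (by omega) (by omega)))
  have hWinj : Set.InjOn W ↑(Finset.range (k + 5)) := by
    intro i hi j hj hEq
    simp only [Finset.coe_range, Set.mem_Iio] at hi hj
    by_contra hne'
    rcases Nat.lt_or_ge i j with h | h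
    · exact absurd (congrArg Prod.fst hEq) (ne_of_lt (hWlt h hj))
    · have h' : j < i := by omega
      exact absurd (congrArg Prod.fst hEq) (ne_of_gt (hWlt h' hi))
  -- main case analysis
  by_contra hne
  rcases lt_trichotomy (ptSlope (W 0) (U 1)) (ptSlope (W 0) (W (k + 4))) with hB | hE | hA
  · -- case B : t < chord to W (k+4)
    rcases lt_trichotomy (U 1).1 ((W (k + 4)).1) with hxlt | hxeq | hxgt
    · -- B2 : n-cup through V, U 1, W (k+4)
      apply hcup
      refine ⟨fun i => if i = k + 4 then U 1 else if i = k + 5 then W (k + 4) else V i, ?_, ?_, ?_⟩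
      · intro i hi
        dsimp only
        by_cases h4 : i = k + 4
        · rw [if_pos h4]; exact huP
        · rw [if_neg h4]
          by_cases h5 : i = k + 5
          · rw [if_pos h5]; exact hWm (k + 4) (by omega)
          · rw [if_neg h5]; exact hVm i (by omega)
      · intro i hi
        dsimp only
        by_cases h4 : i = k + 4
        · subst h4
          rw [if_pos rfl, if_neg (by omega : ¬ (k + 4 + 1 = k + 4)), if_pos rfl]
          exact hxlt
        · by_cases h3 : i = k + 3
          · subst h3
            rw [if_neg (by omega : ¬ (k + 3 = k + 4)), if_neg (by omega : ¬ (k + 3 = k + 5)),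
              if_pos (by omega : k + 3 + 1 = k + 4), hVq]
            exact hxqu
          · rw [if_neg (by omega : ¬ (i = k + 4)), if_neg (by omega : ¬ (i = k + 5)),
              if_neg (by omega : ¬ (i + 1 = k + 4)), if_neg (by omega : ¬ (i + 1 = k + 5))]
            exact hVx i (by omega)
      · intro i hi
        dsimp only
        by_cases h3 : i = k + 3
        · subst h3
          rw [if_neg (by omega : ¬ (k + 3 = k + 4)), if_neg (by omega : ¬ (k + 3 = k + 5)),
            if_pos (by omega : k + 3 + 1 = k + 4),
            if_neg (by omega : ¬ (k + 3 + 2 = k + 4)), if_pos (by omega : k + 3 + 2 = k + 5), hVq]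
          -- t ≤ slope (U 1) (W (k+4))
          have := slope_S3 hxqu hxlt hB
          linarith
        · by_cases h2' : i = k + 2
          · subst h2'
            rw [if_neg (by omega : ¬ (k + 2 = k + 4)), if_neg (by omega : ¬ (k + 2 = k + 5)),
              if_neg (by omega : ¬ (k + 2 + 1 = k + 4)), if_neg (by omega : ¬ (k + 2 + 1 = k + 5)),
              if_pos (by omega : k + 2 + 2 = k + 4)]
            show ptSlope (V (k + 2)) (V (k + 3)) ≤ ptSlope (V (k + 3)) (U 1)
            rw [hVq]
            exact le_of_lt hat
          · rw [if_neg (by omega : ¬ (i = k + 4)), if_neg (by omega : ¬ (i = k + 5)),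
              if_neg (by omega : ¬ (i + 1 = k + 4)), if_neg (by omega : ¬ (i + 1 = k + 5)),
              if_neg (by omega : ¬ (i + 2 = k + 4)), if_neg (by omega : ¬ (i + 2 = k + 5))]
            exact hVs i (by omega)
    · exact hx (U 1) huP (W (k + 4)) (hWm (k + 4) (by omega)) hne hxeq
    · -- B1 : U 1 to the right of W (k+4)
      have hx3u : (W (k + 3)).1 < (U 1).1 := lt_trans (hWlt (by omega) (by omega)) hxgt
      have h3ut : ptSlope (W 0) (U 1) < ptSlope (W (k + 3)) (U 1) :=
        slope_S3 (hWlt (by omega) (by omega)) hx3u hact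
      rcases le_or_gt (ptSlope (W (k + 3)) (U 1)) (ptSlope (W (k + 2)) (W (k + 3))) with hle | hgt2
      · -- (n-1)-cap (W (k+2), W (k+3), U 1, U 2, ..., U (k+3))
        apply hcap
        refine ⟨fun i => match i with
          | 0 => W (k + 2) | 1 => W (k + 3) | (j + 2) => U (j + 1), ?_, ?_, ?_⟩
        · intro i hi
          match i with
          | 0 => exact hWm (k + 2) (by omega)
          | 1 => exact hWm (k + 3) (by omega)
          | (j + 2) => exact hUm (j + 1) (by omega)
        · intro i hi
          match i with
          | 0 => exact hWlt (by omega) (by omega)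
          | 1 => exact hx3u
          | (j + 2) => exact hUx (j + 1) (by omega)
        · intro i hi
          match i with
          | 0 => exact hle
          | 1 => show ptSlope (U 1) (U 2) ≤ ptSlope (W (k + 3)) (U 1); linarith
          | (j + 2) => exact hUs (j + 1) (by omega)
      · -- convex position: q, W 1, ..., W (k+4), U 1  (U 1 rightmost, below the chord)
        have hxWu : ∀ i, i < k + 5 → (W i).1 < (U 1).1 := by
          intro i hi
          rcases Nat.lt_or_ge i (k + 4) with h | h
          · exact lt_trans (hWlt h (by omega)) hxgt
          · have : i = k + 4 := by omega
            subst this; exact hxgt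
        have hnotmem : U 1 ∉ (Finset.range (k + 5)).image W := by
          intro hmem
          obtain ⟨j, hj, hEq⟩ := Finset.mem_image.1 hmem
          have hj' : j < k + 5 := Finset.mem_range.1 hj
          have := hxWu j hj'
          rw [hEq] at this
          exact lt_irrefl _ this
        apply hconv
        refine ⟨insert (U 1) ((Finset.range (k + 5)).image W), ?_, ?_, ?_⟩
        · intro x hx'
          rcases Finset.mem_insert.1 hx' with rfl | hx''
          · exact huP
          · obtain ⟨j, hj, rfl⟩ := Finset.mem_image.1 hx''
            exact hWm j (Finset.mem_range.1 hj)
        · rw [Finset.card_insert_of_notMem hnotmem, Finset.card_image_of_injOn hWinj,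
            Finset.card_range]
        · intro p hp
          rcases Finset.mem_insert.1 hp with rfl | hp'
          · -- p = U 1 : rightmost
            refine not_mem_hull_of_lin _ _ (-1) 0 ?_
            intro x hxS hxp
            rcases Finset.mem_insert.1 hxS with rfl | hx''
            · exact absurd rfl hxp
            · obtain ⟨i, hi, rfl⟩ := Finset.mem_image.1 hx''
              have := hxWu i (Finset.mem_range.1 hi)
              linarith
          · obtain ⟨j, hj, rfl⟩ := Finset.mem_image.1 hp'
            have hj' : j < k + 5 := Finset.mem_range.1 hj
            rcases Nat.eq_zero_or_pos j with rfl | hj0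
            · -- p = W 0 : leftmost
              refine not_mem_hull_of_lin _ _ 1 0 ?_
              intro x hxS hxp
              rcases Finset.mem_insert.1 hxS with rfl | hx''
              · linarith
              · obtain ⟨i, hi, rfl⟩ := Finset.mem_image.1 hx''
                have hi' : i < k + 5 := Finset.mem_range.1 hi
                have hine : i ≠ 0 := fun h => hxp (by rw [h])
                have := hWlt (show 0 < i by omega) hi'
                linarith
            · by_cases hj4 : j = k + 4
              · -- p = W (k+4) : extreme from above
                subst hj4
                set s := (ptSlope (W (k + 4)) (U 1) + ptSlope (W 0) (W (k + 4))) / 2 with hs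
                have hWu4 : ptSlope (W (k + 4)) (U 1) < ptSlope (W 0) (U 1) :=
                  slope_S4 (hWlt (by omega) (by omega)) hxgt hB
                have hs1 : ptSlope (W (k + 4)) (U 1) < s := by rw [hs]; linarith
                have hs2 : s < ptSlope (W 0) (W (k + 4)) := by rw [hs]; linarith
                refine not_mem_hull_of_lin _ _ s (-1) ?_
                intro x hxS hxp
                rcases Finset.mem_insert.1 hxS with rfl | hx''
                · have := lin_lt_of_slope_lt hxgt hs1
                  linarith
                · obtain ⟨i, hi, rfl⟩ := Finset.mem_image.1 hx''
                  have hi' : i < k + 5 := Finset.mem_range.1 hi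
                  have hine : i ≠ k + 4 := fun h => hxp (by rw [h])
                  rcases Nat.eq_zero_or_pos i with rfl | hi0
                  · have := lin_lt_of_lt_slope (hWlt (show 0 < k + 4 by omega) (by omega)) hs2
                    linarith
                  · have hcm : ptSlope (W 0) (W (k + 4)) ≤ ptSlope (W i) (W (k + 4)) :=
                      cup_chord_mono' hWx hWs (show 0 < i by omega) (show i < k + 4 by omega)
                        (by omega)
                    have := lin_lt_of_lt_slope (hWlt (show i < k + 4 by omega) (by omega))
                      (lt_of_lt_of_le hs2 hcm)
                    linarith
              · by_cases hj3 : j = k + 3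
                · -- p = W (k+3)
                  subst hj3
                  set M := min (ptSlope (W (k + 3)) (W (k + 4))) (ptSlope (W (k + 3)) (U 1))
                    with hM
                  have hMgt : ptSlope (W (k + 2)) (W (k + 3)) < M :=
                    lt_min (hedge (k + 2) (by omega)) hgt2
                  set s := (ptSlope (W (k + 2)) (W (k + 3)) + M) / 2 with hs
                  have hs1 : ptSlope (W (k + 2)) (W (k + 3)) < s := by rw [hs]; linarith
                  have hs2 : s < M := by rw [hs]; linarith
                  refine not_mem_hull_of_lin _ _ (-s) 1 ?_
                  intro x hxS hxp
                  rcases Finset.mem_insert.1 hxS with rfl | hx''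
                  · have h1 : s < ptSlope (W (k + 3)) (U 1) :=
                      lt_of_lt_of_le hs2 (min_le_right _ _)
                    have := lin_lt_of_lt_slope hx3u h1
                    linarith
                  · obtain ⟨i, hi, rfl⟩ := Finset.mem_image.1 hx''
                    have hi' : i < k + 5 := Finset.mem_range.1 hi
                    have hine : i ≠ k + 3 := fun h => hxp (by rw [h])
                    rcases Nat.lt_or_ge i (k + 3) with hlt' | hge'
                    · have hub : ptSlope (W i) (W (k + 3)) ≤ ptSlope (W (k + 2)) (W (k + 3)) :=
                        cup_chord_ub hWx hWs (show i ≤ k + 2 by omega) (by omega)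
                      have := lin_lt_of_slope_lt (hWlt hlt' (by omega)) (lt_of_le_of_lt hub hs1)
                      linarith
                    · have hieq : i = k + 4 := by omega
                      subst hieq
                      have h1 : s < ptSlope (W (k + 3)) (W (k + 4)) :=
                        lt_of_lt_of_le hs2 (min_le_left _ _)
                      have := lin_lt_of_lt_slope (hWlt (show k + 3 < k + 4 by omega) (by omega)) h1
                      linarith
                · -- p = W j, 1 ≤ j ≤ k+2 : interior
                  obtain ⟨j', rfl⟩ : ∃ j', j = j' + 1 := ⟨j - 1, by omega⟩
                  have hjle : j' + 1 ≤ k + 2 := by omega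
                  set s := (ptSlope (W j') (W (j' + 1)) + ptSlope (W (j' + 1)) (W (j' + 2))) / 2
                    with hs
                  have hLR : ptSlope (W j') (W (j' + 1)) < ptSlope (W (j' + 1)) (W (j' + 2)) :=
                    hedge j' (by omega)
                  have hs1 : ptSlope (W j') (W (j' + 1)) < s := by rw [hs]; linarith
                  have hs2 : s < ptSlope (W (j' + 1)) (W (j' + 2)) := by rw [hs]; linarith
                  refine not_mem_hull_of_lin _ _ (-s) 1 ?_
                  intro x hxS hxp
                  rcases Finset.mem_insert.1 hxS with rfl | hx''
                  · -- x = U 1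
                    have hub : ptSlope (W (j' + 1)) (W (k + 3)) ≤
                        ptSlope (W (k + 2)) (W (k + 3)) :=
                      cup_chord_ub hWx hWs (show j' + 1 ≤ k + 2 by omega) (by omega)
                    have hlb : ptSlope (W (j' + 1)) (W (j' + 2)) ≤
                        ptSlope (W (j' + 1)) (W (k + 3)) :=
                      cup_chord_lb hWx hWs (show j' + 1 ≤ k + 2 by omega) (by omega)
                    have hchain : ptSlope (W (j' + 1)) (W (k + 3)) ≤
                        ptSlope (W (j' + 1)) (U 1) :=
                      (slope_le_left (hWlt (show j' + 1 < k + 3 by omega) (by omega)) hx3u).1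
                        (le_of_lt (lt_of_le_of_lt hub hgt2))
                    have := lin_lt_of_lt_slope
                      (lt_trans (hWlt (show j' + 1 < k + 4 by omega) (by omega)) hxgt)
                      (lt_of_lt_of_le hs2 (le_trans hlb hchain))
                    linarith
                  · obtain ⟨i, hi, rfl⟩ := Finset.mem_image.1 hx''
                    have hi' : i < k + 5 := Finset.mem_range.1 hi
                    have hine : i ≠ j' + 1 := fun h => hxp (by rw [h])
                    rcases Nat.lt_or_ge i (j' + 1) with hlt' | hge'
                    · have hub : ptSlope (W i) (W (j' + 1)) ≤ ptSlope (W j') (W (j' + 1)) :=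
                        cup_chord_ub hWx hWs (show i ≤ j' by omega) (by omega)
                      have := lin_lt_of_slope_lt (hWlt hlt' (by omega)) (lt_of_le_of_lt hub hs1)
                      linarith
                    · have hgt' : j' + 1 < i := by omega
                      obtain ⟨i', rfl⟩ : ∃ i', i = i' + 1 := ⟨i - 1, by omega⟩
                      have hlb : ptSlope (W (j' + 1)) (W (j' + 2)) ≤
                          ptSlope (W (j' + 1)) (W (i' + 1)) :=
                        cup_chord_lb hWx hWs (show j' + 1 ≤ i' by omega) (by omega)
                      have := lin_lt_of_lt_slope (hWlt hgt' (by omega))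
                        (lt_of_lt_of_le hs2 hlb)
                      linarith
  · -- case E : collinear q, W (k+4), U 1
    refine hgp (W 0) hqP (W (k + 4)) (hWm (k + 4) (by omega)) (U 1) huP ?_ ?_ ?_ ?_
    · intro h; exact absurd (congrArg Prod.fst h) (ne_of_lt (hWlt (by omega) (by omega)))
    · intro h; exact absurd (congrArg Prod.fst h) (ne_of_lt hxqu)
    · exact fun h => hne h.symm
    · exact collinear_of_slope_eq (hWlt (by omega) (by omega)) hxqu hE.symm
  · -- case A : t > chord to W (k+4)
    rcases lt_trichotomy (U 1).1 ((W (k + 4)).1) with hxlt | hxeq | hxgt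
    · -- convex position: q, W 1, ..., W (k+4), U 1  (U 1 above the chord)
      have hnotmem : U 1 ∉ (Finset.range (k + 5)).image W := by
        intro hmem
        obtain ⟨j, hj, hEq⟩ := Finset.mem_image.1 hmem
        have hj' : j < k + 5 := Finset.mem_range.1 hj
        rcases Nat.eq_zero_or_pos j with rfl | hj0
        · rw [hEq] at hxqu; exact lt_irrefl _ hxqu
        · by_cases hj4 : j = k + 4
          · subst hj4; exact hne hEq.symm
          · have h1 : ptSlope (W 0) (W j) < ptSlope (W 0) (W (k + 4)) :=
              hchordC j hj0 (by omega)
            rw [hEq] at h1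
            linarith
      apply hconv
      refine ⟨insert (U 1) ((Finset.range (k + 5)).image W), ?_, ?_, ?_⟩
      · intro x hx'
        rcases Finset.mem_insert.1 hx' with rfl | hx''
        · exact huP
        · obtain ⟨j, hj, rfl⟩ := Finset.mem_image.1 hx''
          exact hWm j (Finset.mem_range.1 hj)
      · rw [Finset.card_insert_of_notMem hnotmem, Finset.card_image_of_injOn hWinj,
          Finset.card_range]
      · intro p hp
        rcases Finset.mem_insert.1 hp with rfl | hp'
        · -- p = U 1 : above the chord
          set C := ptSlope (W 0) (W (k + 4)) with hC
          have hq' : (W 0).2 - C * (W 0).1 < (U 1).2 - C * (U 1).1 :=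
            lin_lt_of_lt_slope hxqu hA
          have hd : (W (k + 4)).1 - (W 0).1 ≠ 0 :=
            ne_of_gt (by have := hWlt (show 0 < k + 4 by omega) (by omega); linarith)
          have hCline : (W (k + 4)).2 - (W 0).2 = C * ((W (k + 4)).1 - (W 0).1) := by
            rw [hC]
            unfold ptSlope
            exact (div_mul_cancel₀ _ hd).symm
          refine not_mem_hull_of_lin _ _ C (-1) ?_
          intro x hxS hxp
          rcases Finset.mem_insert.1 hxS with rfl | hx''
          · exact absurd rfl hxp
          · obtain ⟨i, hi, rfl⟩ := Finset.mem_image.1 hx''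
            have hi' : i < k + 5 := Finset.mem_range.1 hi
            rcases Nat.eq_zero_or_pos i with rfl | hi0
            · linarith
            · by_cases hi4 : i = k + 4
              · subst hi4; linarith
              · have h1 : ptSlope (W 0) (W i) < C := hchordC i hi0 (by omega)
                have := lin_lt_of_slope_lt (hWlt (show 0 < i by omega) hi') h1
                linarith
        · obtain ⟨j, hj, rfl⟩ := Finset.mem_image.1 hp'
          have hj' : j < k + 5 := Finset.mem_range.1 hj
          rcases Nat.eq_zero_or_pos j with rfl | hj0
          · -- p = W 0 : leftmost
            refine not_mem_hull_of_lin _ _ 1 0 ?_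
            intro x hxS hxp
            rcases Finset.mem_insert.1 hxS with rfl | hx''
            · linarith
            · obtain ⟨i, hi, rfl⟩ := Finset.mem_image.1 hx''
              have hi' : i < k + 5 := Finset.mem_range.1 hi
              have hine : i ≠ 0 := fun h => hxp (by rw [h])
              have := hWlt (show 0 < i by omega) hi'
              linarith
          · by_cases hj4 : j = k + 4
            · -- p = W (k+4) : rightmost
              subst hj4
              refine not_mem_hull_of_lin _ _ (-1) 0 ?_
              intro x hxS hxp
              rcases Finset.mem_insert.1 hxS with rfl | hx''
              · linarith
              · obtain ⟨i, hi, rfl⟩ := Finset.mem_image.1 hx''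
                have hi' : i < k + 5 := Finset.mem_range.1 hi
                have hine : i ≠ k + 4 := fun h => hxp (by rw [h])
                have := hWlt (show i < k + 4 by omega) (by omega)
                linarith
            · -- p = W j, 1 ≤ j ≤ k + 3 : interior, uses interpolation
              obtain ⟨j', rfl⟩ : ∃ j', j = j' + 1 := ⟨j - 1, by omega⟩
              have hjle : j' + 1 ≤ k + 3 := by omega
              set s := (ptSlope (W j') (W (j' + 1)) + ptSlope (W (j' + 1)) (W (j' + 2))) / 2
                with hs
              have hLR : ptSlope (W j') (W (j' + 1)) < ptSlope (W (j' + 1)) (W (j' + 2)) :=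
                hedge j' (by omega)
              have hs1 : ptSlope (W j') (W (j' + 1)) < s := by rw [hs]; linarith
              have hs2 : s < ptSlope (W (j' + 1)) (W (j' + 2)) := by rw [hs]; linarith
              refine not_mem_hull_of_lin _ _ (-s) 1 ?_
              intro x hxS hxp
              rcases Finset.mem_insert.1 hxS with rfl | hx''
              · -- x = U 1 : interpolation between W 0 and W (k + 4)
                have hub : ptSlope (W 0) (W (j' + 1)) ≤ ptSlope (W j') (W (j' + 1)) :=
                  cup_chord_ub hWx hWs (show 0 ≤ j' by omega) (by omega)
                have hlb : ptSlope (W (j' + 1)) (W (j' + 2)) ≤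
                    ptSlope (W (j' + 1)) (W (k + 4)) :=
                  cup_chord_lb hWx hWs (show j' + 1 ≤ k + 3 by omega) (by omega)
                have hAle : (W (j' + 1)).2 - s * (W (j' + 1)).1 < (W 0).2 - s * (W 0).1 :=
                  lin_lt_of_slope_lt (hWlt (show 0 < j' + 1 by omega) (by omega))
                    (lt_of_le_of_lt hub hs1)
                have hBle : (W (j' + 1)).2 - s * (W (j' + 1)).1 <
                    (W (k + 4)).2 - s * (W (k + 4)).1 :=
                  lin_lt_of_lt_slope (hWlt (show j' + 1 < k + 4 by omega) (by omega))
                    (lt_of_lt_of_le hs2 hlb)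
                have := above_interp hxqu hxlt hAle hBle hA
                linarith
              · obtain ⟨i, hi, rfl⟩ := Finset.mem_image.1 hx''
                have hi' : i < k + 5 := Finset.mem_range.1 hi
                have hine : i ≠ j' + 1 := fun h => hxp (by rw [h])
                rcases Nat.lt_or_ge i (j' + 1) with hlt' | hge'
                · have hub : ptSlope (W i) (W (j' + 1)) ≤ ptSlope (W j') (W (j' + 1)) :=
                    cup_chord_ub hWx hWs (show i ≤ j' by omega) (by omega)
                  have := lin_lt_of_slope_lt (hWlt hlt' (by omega)) (lt_of_le_of_lt hub hs1)
                  linarith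
                · have hgt' : j' + 1 < i := by omega
                  obtain ⟨i', rfl⟩ : ∃ i', i = i' + 1 := ⟨i - 1, by omega⟩
                  have hlb : ptSlope (W (j' + 1)) (W (j' + 2)) ≤
                      ptSlope (W (j' + 1)) (W (i' + 1)) :=
                    cup_chord_lb hWx hWs (show j' + 1 ≤ i' by omega) (by omega)
                  have := lin_lt_of_lt_slope (hWlt hgt' (by omega)) (lt_of_lt_of_le hs2 hlb)
                  linarith
    · exact hx (U 1) huP (W (k + 4)) (hWm (k + 4) (by omega)) hne hxeq
    · -- A2
      have h4ut : ptSlope (W 0) (U 1) < ptSlope (W (k + 4)) (U 1) :=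
        slope_S3 (hWlt (by omega) (by omega)) hxgt hA
      rcases le_or_gt (ptSlope (W (k + 3)) (W (k + 4))) (ptSlope (W (k + 4)) (U 1)) with hle | hgt2
      · -- n-cup W ++ U 1
        apply hcup
        refine ⟨fun i => if i = k + 5 then U 1 else W i, ?_, ?_, ?_⟩
        · intro i hi
          dsimp only
          by_cases h5 : i = k + 5
          · rw [if_pos h5]; exact huP
          · rw [if_neg h5]; exact hWm i (by omega)
        · intro i hi
          dsimp only
          by_cases h4 : i = k + 4
          · subst h4
            rw [if_neg (by omega : ¬ (k + 4 = k + 5)), if_pos rfl]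
            exact hxgt
          · rw [if_neg (by omega : ¬ (i = k + 5)), if_neg (by omega : ¬ (i + 1 = k + 5))]
            exact hWx i (by omega)
        · intro i hi
          dsimp only
          by_cases h3 : i = k + 3
          · subst h3
            rw [if_neg (by omega : ¬ (k + 3 = k + 5)), if_neg (by omega : ¬ (k + 3 + 1 = k + 5)),
              if_pos (by omega : k + 3 + 2 = k + 5)]
            exact hle
          · rw [if_neg (by omega : ¬ (i = k + 5)), if_neg (by omega : ¬ (i + 1 = k + 5)),
              if_neg (by omega : ¬ (i + 2 = k + 5))]
            exact hWs i (by omega)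
      · -- (n-1)-cap (W (k+3), W (k+4), U 1, U 2, ..., U (k+3))
        apply hcap
        refine ⟨fun i => match i with
          | 0 => W (k + 3) | 1 => W (k + 4) | (j + 2) => U (j + 1), ?_, ?_, ?_⟩
        · intro i hi
          match i with
          | 0 => exact hWm (k + 3) (by omega)
          | 1 => exact hWm (k + 4) (by omega)
          | (j + 2) => exact hUm (j + 1) (by omega)
        · intro i hi
          match i with
          | 0 => exact hWlt (by omega) (by omega)
          | 1 => exact hxgt
          | (j + 2) => exact hUx (j + 1) (by omega)
        · intro i hi
          match i with
          | 0 => exact le_of_lt hgt2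
          | 1 => show ptSlope (U 1) (U 2) ≤ ptSlope (W (k + 4)) (U 1); linarith
          | (j + 2) => exact hUs (j + 1) (by omega)
end

section
/- Let n ≥ 5, let m be a positive integer, and let f assign a real number f(i,j) to each pair 1 ≤ i < j ≤ m. Suppose f is (n, n−1)-free, and suppose additionally that no index is simultaneously the last element of an (n−2)-cup and the first element of both an (n−2)-cap and an (n−1)-cup. Then for every index i that is simultaneously the first element of an (n−2)-cap and the first element of an (n−1)-cup with respect to f, the index i is not the last element of any (n−2)-cap and not the last element of any (n−2)-cup. -/
/-- Claim 4 in the language of index functions: if `f` is `(n, n-1)`-free and no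
index is simultaneously the end of an `(n-2)`-cup and the beginning of both an
`(n-2)`-cap and an `(n-1)`-cup, then every index that begins both an `(n-2)`-cap
and an `(n-1)`-cup is not the end of any `(n-2)`-cap nor of any `(n-2)`-cup. -/
theorem claim_last (n m : ℕ) (hn : 5 ≤ n) (hm : 1 ≤ m)
    (f : ℕ → ℕ → ℝ) (hf : IsFree m f n (n - 1))
    (hno : ∀ q : ℕ, ¬ ((∃ c, IsCup m f (n - 2) c ∧ c (n - 3) = q) ∧
        (∃ c, IsCap m f (n - 2) c ∧ c 0 = q) ∧
        (∃ c, IsCup m f (n - 1) c ∧ c 0 = q))) :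
    ∀ i : ℕ,
      (∃ c, IsCap m f (n - 2) c ∧ c 0 = i) →
      (∃ c, IsCup m f (n - 1) c ∧ c 0 = i) →
      (¬ ∃ c, IsCap m f (n - 2) c ∧ c (n - 3) = i) ∧
      (¬ ∃ c, IsCup m f (n - 2) c ∧ c (n - 3) = i) := by
  rintro i ⟨c, hc, hc0⟩ ⟨u, hu, hu0⟩
  obtain ⟨hub, hum, huc⟩ := hu
  constructor
  · rintro ⟨e, ⟨heb, hem, hec⟩, hei⟩
    by_cases hab : f (e (n - 4)) i ≤ f i (u 1)
    · -- build an n-cup: e (n-4), u 0, u 1, …, u (n-2)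
      apply hf.1
      refine ⟨fun j => if j = 0 then e (n - 4) else u (j - 1), ?_, ?_, ?_⟩
      · intro j hj
        by_cases h0 : j = 0
        · simp only [h0, if_pos rfl]; exact heb _ (by omega)
        · simp only [if_neg h0]; exact hub _ (by omega)
      · intro j hj
        by_cases h0 : j = 0
        · subst h0
          simp only [if_pos rfl, if_neg (by omega : (0:ℕ) + 1 ≠ 0)]
          have h1 : e (n - 4) < e (n - 4 + 1) := hem _ (by omega)
          have h2 : n - 4 + 1 = n - 3 := by omega
          have h3 : (0 : ℕ) + 1 - 1 = 0 := by omega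
          rw [h3, hu0, ← hei, ← h2]
          exact h1
        · simp only [if_neg h0, if_neg (by omega : j + 1 ≠ 0)]
          have := hum (j - 1) (by omega)
          have h2 : j - 1 + 1 = j + 1 - 1 := by omega
          rwa [h2] at this
      · intro j hj
        by_cases h0 : j = 0
        · subst h0
          simp only [if_pos rfl, if_neg (by omega : (0:ℕ) + 1 ≠ 0),
            if_neg (by omega : (0:ℕ) + 2 ≠ 0)]
          have h3 : (0 : ℕ) + 1 - 1 = 0 := by omega
          have h4 : (0 : ℕ) + 2 - 1 = 1 := by omega
          rw [h3, h4, hu0]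
          exact hab
        · simp only [if_neg h0, if_neg (by omega : j + 1 ≠ 0),
            if_neg (by omega : j + 2 ≠ 0)]
          have := huc (j - 1) (by omega)
          have h2 : j - 1 + 1 = j + 1 - 1 := by omega
          have h3 : j - 1 + 2 = j + 2 - 1 := by omega
          rwa [h2, h3] at this
    · -- build an (n-1)-cap: e 0, …, e (n-3), u 1
      push_neg at hab
      apply hf.2
      refine ⟨fun j => if j = n - 2 then u 1 else e j, ?_, ?_, ?_⟩
      · intro j hj
        by_cases h0 : j = n - 2
        · simp only [if_pos h0]; exact hub _ (by omega)
        · simp only [if_neg h0]; exact heb _ (by omega)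
      · intro j hj
        by_cases h0 : j + 1 = n - 2
        · simp only [if_pos h0, if_neg (by omega : j ≠ n - 2)]
          have h1 : j = n - 3 := by omega
          have h2 : u 0 < u 1 := hum 0 (by omega)
          rw [h1, hei, ← hu0]
          exact h2
        · simp only [if_neg h0, if_neg (by omega : j ≠ n - 2)]
          exact hem _ (by omega)
      · intro j hj
        by_cases h0 : j + 2 = n - 2
        · simp only [if_pos h0, if_neg (by omega : j + 1 ≠ n - 2),
            if_neg (by omega : j ≠ n - 2)]
          have h1 : j + 1 = n - 3 := by omega
          have h2 : j = n - 4 := by omega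
          rw [h1, h2, hei]
          exact le_of_lt hab
        · simp only [if_neg h0, if_neg (by omega : j + 1 ≠ n - 2),
            if_neg (by omega : j ≠ n - 2)]
          exact hec _ (by omega)
  · rintro ⟨e, he, hei⟩
    exact hno i ⟨⟨e, he, hei⟩, ⟨c, hc, hc0⟩, ⟨u, ⟨hub, hum, huc⟩, hu0⟩⟩
end

section
/- Let k, l ≥ 1 and let P be a finite set of points in the plane in general position with pairwise distinct x-coordinates. If |P| > C(k+l, k), then P contains a (k+2)-cup or an (l+2)-cap, where C(a,b) denotes the binomial coefficient. -/
lemma gcup_mono {P Q : Finset (ℝ × ℝ)} (h : P ⊆ Q) {t : ℕ} {q : ℕ → ℝ × ℝ}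
    (hq : IsGCup P t q) : IsGCup Q t q :=
  ⟨fun i hi => h (hq.1 i hi), hq.2.1, hq.2.2⟩

lemma gcap_mono {P Q : Finset (ℝ × ℝ)} (h : P ⊆ Q) {t : ℕ} {q : ℕ → ℝ × ℝ}
    (hq : IsGCap P t q) : IsGCap Q t q :=
  ⟨fun i hi => h (hq.1 i hi), hq.2.1, hq.2.2⟩

lemma distinctX_mono {P Q : Finset (ℝ × ℝ)} (h : P ⊆ Q) (hx : DistinctX Q) :
    DistinctX P := fun p hp q hq hpq => hx p (h hp) q (h hq) hpq

lemma exists_two {P : Finset (ℝ × ℝ)} (hx : DistinctX P) (h : 2 ≤ P.card) :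
    ∃ p ∈ P, ∃ q ∈ P, p.1 < q.1 := by
  obtain ⟨a, ha, b, hb, hab⟩ := Finset.one_lt_card.mp h
  rcases lt_or_gt_of_ne (hx a ha b hb hab) with h1 | h1
  · exact ⟨a, ha, b, hb, h1⟩
  · exact ⟨b, hb, a, ha, h1⟩

lemma cup_two {P : Finset (ℝ × ℝ)} {p q : ℝ × ℝ} (hp : p ∈ P) (hq : q ∈ P)
    (hpq : p.1 < q.1) : IsGCup P 2 (fun i => if i = 0 then p else q) := by
  refine ⟨fun i hi => ?_, fun i hi => ?_, fun i hi => by omega⟩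
  · dsimp only; split <;> assumption
  · have : i = 0 := by omega
    subst this; simpa using hpq

lemma cap_two {P : Finset (ℝ × ℝ)} {p q : ℝ × ℝ} (hp : p ∈ P) (hq : q ∈ P)
    (hpq : p.1 < q.1) : IsGCap P 2 (fun i => if i = 0 then p else q) := by
  refine ⟨fun i hi => ?_, fun i hi => ?_, fun i hi => by omega⟩
  · dsimp only; split <;> assumption
  · have : i = 0 := by omega
    subst this; simpa using hpq

lemma main_aux : ∀ n k l (P : Finset (ℝ × ℝ)), k + l ≤ n → DistinctX P →
    (k + l).choose k < P.card →
    (∃ q, IsGCup P (k + 2) q) ∨ (∃ q, IsGCap P (l + 2) q) := by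
  intro n
  induction n with
  | zero =>
    intro k l P hn hx hcard
    have hk : k = 0 := by omega
    have hl : l = 0 := by omega
    subst hk; subst hl
    simp only [Nat.choose_zero_right] at hcard
    obtain ⟨p, hp, q, hq, hpq⟩ := exists_two hx (by omega)
    exact Or.inl ⟨_, cup_two hp hq hpq⟩
  | succ n ih =>
    intro k l P hn hx hcard
    by_cases hk : k = 0
    · subst hk
      simp only [Nat.choose_zero_right] at hcard
      obtain ⟨p, hp, q, hq, hpq⟩ := exists_two hx (by omega)
      exact Or.inl ⟨_, cup_two hp hq hpq⟩
    by_cases hl : l = 0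
    · subst hl
      rw [Nat.add_zero, Nat.choose_self] at hcard
      obtain ⟨p, hp, q, hq, hpq⟩ := exists_two hx (by omega)
      exact Or.inr ⟨_, cap_two hp hq hpq⟩
    -- main case
    obtain ⟨k', rfl⟩ : ∃ k', k = k' + 1 := ⟨k - 1, by omega⟩
    obtain ⟨l', rfl⟩ : ∃ l', l = l' + 1 := ⟨l - 1, by omega⟩
    classical
    set E := P.filter (fun p => ∃ q, IsGCup P (k' + 2) q ∧ q (k' + 1) = p) with hE
    have hEP : E ⊆ P := Finset.filter_subset _ _
    have hsplit : (P \ E).card + E.card = P.card :=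
      Finset.card_sdiff_add_card_eq_card hEP
    have hpascal : (k' + 1 + (l' + 1)).choose (k' + 1)
        = (k' + (l' + 1)).choose k' + (k' + 1 + l').choose (k' + 1) := by
      have : k' + 1 + (l' + 1) = (k' + (l' + 1)) + 1 := by omega
      rw [this, Nat.choose_succ_succ]
      congr 2
      omega
    rw [hpascal] at hcard
    by_cases hcase : (k' + (l' + 1)).choose k' < (P \ E).card
    · -- apply IH to P \ E with (k', l'+1)
      rcases ih k' (l' + 1) (P \ E) (by omega)
          (distinctX_mono (Finset.sdiff_subset) hx) hcase with ⟨q, hq⟩ | ⟨q, hq⟩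
      · -- (k'+2)-cup in P \ E: its endpoint is in E, contradiction
        exfalso
        have hmem := hq.1 (k' + 1) (by omega)
        rw [Finset.mem_sdiff] at hmem
        exact hmem.2 (Finset.mem_filter.mpr
          ⟨hmem.1, q, gcup_mono Finset.sdiff_subset hq, rfl⟩)
      · exact Or.inr ⟨q, gcap_mono Finset.sdiff_subset hq⟩
    · -- E is large; apply IH with (k'+1, l')
      have hEcard : (k' + 1 + l').choose (k' + 1) < E.card := by omega
      rcases ih (k' + 1) l' E (by omega) (distinctX_mono hEP hx) hEcard with
        ⟨q, hq⟩ | ⟨c, hc⟩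
      · exact Or.inl ⟨q, gcup_mono hEP hq⟩
      · -- (l'+2)-cap in E; glue with a (k'+3)-cup ending at c 0
        have hc0 : c 0 ∈ E := hc.1 0 (by omega)
        rw [hE, Finset.mem_filter] at hc0
        obtain ⟨qc, hqc, hqcend⟩ := hc0.2
        rcases le_total (ptSlope (qc k') (c 0)) (ptSlope (c 0) (c 1)) with hs | hs
        · -- extend the cup by c 1
          refine Or.inl ⟨fun i => if i ≤ k' + 1 then qc i else c (i - (k' + 1)),
            fun i hi => ?_, fun i hi => ?_, fun i hi => ?_⟩
          · dsimp only; split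
            · exact hqc.1 i (by omega)
            · exact hEP (hc.1 _ (by omega))
          · by_cases h : i + 1 ≤ k' + 1
            · simp only [if_pos (by omega : i ≤ k' + 1), if_pos h]
              exact hqc.2.1 i (by omega)
            · have hi' : i = k' + 1 := by omega
              simp only [if_pos (by omega : i ≤ k' + 1), if_neg h,
                (by omega : i + 1 - (k' + 1) = 1)]
              rw [hi', hqcend]
              exact hc.2.1 0 (by omega)
          · by_cases h : i + 2 ≤ k' + 1
            · simp only [if_pos (by omega : i ≤ k' + 1),
                if_pos (by omega : i + 1 ≤ k' + 1), if_pos h]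
              exact hqc.2.2 i (by omega)
            · have hi' : i = k' := by omega
              simp only [if_pos (by omega : i ≤ k' + 1),
                if_pos (by omega : i + 1 ≤ k' + 1), if_neg h,
                (by omega : i + 2 - (k' + 1) = 1)]
              rw [hi', hqcend]
              exact hs
        · -- extend the cap by qc k'
          refine Or.inr ⟨fun i => if i = 0 then qc k' else c (i - 1),
            fun i hi => ?_, fun i hi => ?_, fun i hi => ?_⟩
          · dsimp only; split
            · exact hqc.1 k' (by omega)
            · exact hEP (hc.1 _ (by omega))
          · by_cases h : i = 0
            · subst h
              simp only [if_pos rfl, if_neg (by omega : ¬ (0 + 1 = 0)),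
                (by omega : 0 + 1 - 1 = 0)]
              have := hqc.2.1 k' (by omega)
              rwa [hqcend] at this
            · simp only [if_neg h, if_neg (by omega : ¬ (i + 1 = 0)),
                (by omega : i + 1 - 1 = i)]
              have := hc.2.1 (i - 1) (by omega)
              rwa [(by omega : i - 1 + 1 = i)] at this
          · by_cases h : i = 0
            · subst h
              simp only [if_pos rfl, if_neg (by omega : ¬ (0 + 1 = 0)),
                if_neg (by omega : ¬ (0 + 2 = 0)),
                (by omega : 0 + 1 - 1 = 0), (by omega : 0 + 2 - 1 = 1), hqcend]
              exact hs
            · simp only [if_neg h, if_neg (by omega : ¬ (i + 1 = 0)),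
                if_neg (by omega : ¬ (i + 2 = 0)),
                (by omega : i + 1 - 1 = i), (by omega : i + 2 - 1 = i + 1)]
              have := hc.2.2 (i - 1) (by omega)
              rwa [(by omega : i - 1 + 1 = i), (by omega : i - 1 + 2 = i + 1)] at this

/-- Erdős–Szekeres cup–cap theorem for point sets: if `|P| > C(k+l, k)` then `P`
contains a `(k+2)`-cup or an `(l+2)`-cap. -/
theorem cups_caps_points (k l : ℕ) (hk : 1 ≤ k) (hl : 1 ≤ l)
    (P : Finset (ℝ × ℝ)) (hgp : GeneralPosition P) (hx : DistinctX P)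
    (hcard : (k + l).choose k < P.card) :
    (∃ q, IsGCup P (k + 2) q) ∨ (∃ q, IsGCap P (l + 2) q) :=
  main_aux (k + l) k l P le_rfl hx hcard
end
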